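/- arXiv:1805.09685 — 8 statements merged into one kernel-verified Lean document; each statement's English description precedes it below -/
import Mathlib

section
/- Let ω ∈ W_0 satisfy γ(ω) > 1 and let h : [0,∞) → [0,∞) be any function with ω(t) = o(h(t)) as t → ∞. Then for every γ with 0 < γ < γ(ω) there exists a function σ ∈ W_0 such that ω(t) = o(σ(t)) as t → ∞, σ(t) = o(h(t)) as t → ∞, and γ(σ) > γ. -/
open Filter MeasureTheory Set Asymptotics

noncomputable section

/-- A *weight function*: continuous and nondecreasing on `[0,∞)`, vanishing at `0`,
and tending to `+∞` at `+∞`. -/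
structure IsWeightFunction (ω : ℝ → ℝ) : Prop where
  continuousOn : ContinuousOn ω (Set.Ici 0)
  monotoneOn : MonotoneOn ω (Set.Ici 0)
  map_zero : ω 0 = 0
  tendsto_atTop : Filter.Tendsto ω Filter.atTop Filter.atTop

/-- Condition `(P_{ω,γ})`: there is `K > 1` with `limsup_{t→∞} ω(K^γ t)/ω(t) < K`,
expressed through an eventual bound by some `c < K`. -/
def Pcond (ω : ℝ → ℝ) (γ : ℝ) : Prop :=
  ∃ K : ℝ, 1 < K ∧ ∃ c : ℝ, c < K ∧ ∀ᶠ t : ℝ in Filter.atTop, ω (K ^ γ * t) / ω t ≤ c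

/-- The growth index `γ(ω) ∈ [0,+∞]`, with `sup ∅ = 0`. -/
noncomputable def gammaIndex (ω : ℝ → ℝ) : ENNReal :=
  ⨆ γ ∈ {γ : ℝ | 0 < γ ∧ Pcond ω γ}, ENNReal.ofReal γ

/-- Condition `(ω₁)`. -/
def Omega1 (ω : ℝ → ℝ) : Prop :=
  ∃ L : ℝ, 1 ≤ L ∧ ∀ t : ℝ, 0 ≤ t → ω (2 * t) ≤ L * (ω t + 1)

/-- Condition `(ω₃)`: `log t = o(ω t)` as `t → ∞`. -/
def Omega3 (ω : ℝ → ℝ) : Prop :=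
  (fun t : ℝ => Real.log t) =o[Filter.atTop] ω

/-- Condition `(ω₄)`: `t ↦ ω (exp t)` is convex on `ℝ`. -/
def Omega4 (ω : ℝ → ℝ) : Prop :=
  ConvexOn ℝ Set.univ (fun t : ℝ => ω (Real.exp t))

/-- Condition `(ω₅)`: `ω t = o(t)` as `t → ∞`. -/
def Omega5 (ω : ℝ → ℝ) : Prop :=
  ω =o[Filter.atTop] (fun t : ℝ => t)

/-- Condition `(ω_snq)`. -/
def OmegaSnq (ω : ℝ → ℝ) : Prop :=
  ∃ C : ℝ, 0 < C ∧ ∀ y : ℝ, 0 < y →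
    (∫⁻ t in Set.Ioi (1:ℝ), ENNReal.ofReal (ω (y * t) / t ^ 2)) ≤
      ENNReal.ofReal (C * (ω y + 1))

/-- `ω ∈ W₀`: normalized weight function with `(ω₃)` and `(ω₄)`. -/
def InW0 (ω : ℝ → ℝ) : Prop :=
  IsWeightFunction ω ∧ (∀ t ∈ Set.Icc (0:ℝ) 1, ω t = 0) ∧ Omega3 ω ∧ Omega4 ω

/-- The Legendre–Fenchel–Young conjugate `φ*_ω(x) = sup {x y − ω(e^y) : y ≥ 0}`. -/
noncomputable def phiStar (ω : ℝ → ℝ) (x : ℝ) : ℝ :=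
  sSup ((fun y : ℝ => x * y - ω (Real.exp y)) '' Set.Ici 0)

/-- The associated weight matrix `W^l_j = exp((1/l) φ*_ω(l j))`. -/
noncomputable def Wseq (ω : ℝ → ℝ) (l : ℝ) (j : ℕ) : ℝ :=
  Real.exp ((1 / l) * phiStar ω (l * (j : ℝ)))

/-- `w^l_j = W^l_j / j!`. -/
noncomputable def wseq (ω : ℝ → ℝ) (l : ℝ) (j : ℕ) : ℝ :=
  Wseq ω l j / (Nat.factorial j : ℝ)

/-- `h_M(t) = inf_{k ∈ ℕ} M_k t^k`. -/
noncomputable def hFun (M : ℕ → ℝ) (t : ℝ) : ℝ :=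
  ⨅ k : ℕ, M k * t ^ k

/-- The associated function `ω_M(t) = sup_p log (t^p / M_p)` for `t > 0`, `ω_M(0) = 0`. -/
noncomputable def assocWeight (M : ℕ → ℝ) (t : ℝ) : ℝ :=
  if t ≤ 0 then 0 else ⨆ p : ℕ, Real.log (t ^ p / M p)

/-- The upper Legendre conjugate `ω⋆(s) = sup_{t ≥ 0} (ω(t) − s t)`. -/
noncomputable def upperConj (ω : ℝ → ℝ) (s : ℝ) : ℝ :=
  sSup ((fun t : ℝ => ω t - s * t) '' Set.Ici 0)

/-- `(ω⋆)^ι(t) = ω⋆(1/t)` for `t > 0`, with value `0` at `t = 0`. -/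
noncomputable def upperConjIota (ω : ℝ → ℝ) (t : ℝ) : ℝ :=
  if t = 0 then 0 else upperConj ω (1 / t)

/-- The lower Legendre conjugate `(ω^ι)_⋆(t) = inf_{s > 0} (ω(1/s) + t s)`. -/
noncomputable def lowerConjIota (ω : ℝ → ℝ) (t : ℝ) : ℝ :=
  sInf ((fun s : ℝ => ω (1 / s) + t * s) '' Set.Ioi 0)

/-- The unbounded sector `S_γ ⊆ ℂ` of opening `γ π` bisected by direction `0`
(for `0 < γ < 2` it lies in `ℂ`). -/
def sector (γ : ℝ) : Set ℂ :=
  {z : ℂ | z ≠ 0 ∧ |Complex.arg z| < γ * Real.pi / 2}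

/-- `M ∈ LC`: positive, normalized, log-convex, `(M_p)^{1/p} → ∞`. -/
def LCseq (M : ℕ → ℝ) : Prop :=
  (∀ p, 0 < M p) ∧ M 0 = 1 ∧ M 0 ≤ M 1 ∧
  (∀ j : ℕ, 1 ≤ j → M j ^ 2 ≤ M (j - 1) * M (j + 1)) ∧
  Filter.Tendsto (fun p : ℕ => M p ^ ((1 : ℝ) / (p : ℝ))) Filter.atTop Filter.atTop

/-- The partial derivative `∂_i` of a function on `ℝ^d`. -/
noncomputable def partialDeriv {d : ℕ} (i : Fin d)
    (f : EuclideanSpace ℝ (Fin d) → ℂ) : EuclideanSpace ℝ (Fin d) → ℂ :=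
  fun x => fderiv ℝ f x (EuclideanSpace.single i 1)

/-- The iterated partial derivative `∂^j` for a multiindex `j ∈ ℕ^d`. -/
noncomputable def multiDeriv {d : ℕ} (j : Fin d → ℕ)
    (f : EuclideanSpace ℝ (Fin d) → ℂ) : EuclideanSpace ℝ (Fin d) → ℂ :=
  (List.finRange d).foldr (fun i g => (partialDeriv i)^[j i] g) f

end

noncomputable def phiAux (a : ℕ → ℝ) (v : ℝ) : ℝ := ⨆ n : ℕ, ((n:ℝ)+1) * (v - a n)

section PhiAux
variable {a : ℕ → ℝ}

lemma phiAux_bddAbove (han : ∀ n : ℕ, (n:ℝ) ≤ a n) (v : ℝ) :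
    BddAbove (Set.range fun n : ℕ => ((n:ℝ)+1)*(v - a n)) := by
  refine ⟨(v+1)^2, ?_⟩
  rintro x ⟨n, rfl⟩
  show ((n:ℝ)+1)*(v - a n) ≤ (v+1)^2
  have h1 := han n
  have h2 : (0:ℝ) ≤ (n:ℝ) := Nat.cast_nonneg n
  rcases le_or_gt v (a n) with h | h
  · nlinarith [sq_nonneg (v+1), mul_nonneg h2 (sub_nonneg.2 h)]
  · nlinarith

lemma le_phiAux (han : ∀ n : ℕ, (n:ℝ) ≤ a n) (v : ℝ) (n : ℕ) :
    ((n:ℝ)+1)*(v - a n) ≤ phiAux a v :=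
  le_ciSup (phiAux_bddAbove han v) n

lemma phiAux_le {v c : ℝ} (hc : ∀ n : ℕ, ((n:ℝ)+1)*(v - a n) ≤ c) :
    phiAux a v ≤ c := ciSup_le hc

lemma self_le_phiAux (ha0 : a 0 = 0) (han : ∀ n : ℕ, (n:ℝ) ≤ a n) (v : ℝ) :
    v ≤ phiAux a v := by
  simpa [ha0] using le_phiAux han v 0

lemma phiAux_mono (han : ∀ n : ℕ, (n:ℝ) ≤ a n) : Monotone (phiAux a) := by
  intro v w hvw
  refine ciSup_le fun n => le_trans ?_ (le_phiAux han w n)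
  have : (0:ℝ) ≤ (n:ℝ)+1 := by positivity
  nlinarith

lemma phiAux_zero (ha0 : a 0 = 0) (han : ∀ n : ℕ, (n:ℝ) ≤ a n) : phiAux a 0 = 0 := by
  refine le_antisymm (ciSup_le fun n => ?_) (self_le_phiAux ha0 han 0)
  have h1 : (0:ℝ) ≤ a n := le_trans (Nat.cast_nonneg n) (han n)
  have : (0:ℝ) ≤ (n:ℝ)+1 := by positivity
  nlinarith

lemma phiAux_convex_ineq (han : ∀ n : ℕ, (n:ℝ) ≤ a n) (A B p q : ℝ)
    (hp : 0 ≤ p) (hq : 0 ≤ q) (hpq : p + q = 1) :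
    phiAux a (p*A + q*B) ≤ p * phiAux a A + q * phiAux a B := by
  refine ciSup_le fun n => ?_
  have h1 := le_phiAux han A n
  have h2 := le_phiAux han B n
  obtain rfl : q = 1 - p := by linarith
  have e : ((n:ℝ)+1)*(p*A + (1-p)*B - a n)
      = p*(((n:ℝ)+1)*(A - a n)) + (1-p)*(((n:ℝ)+1)*(B - a n)) := by ring
  rw [e]
  exact add_le_add (mul_le_mul_of_nonneg_left h1 hp) (mul_le_mul_of_nonneg_left h2 hq)

lemma phiAux_lip (ha0 : a 0 = 0) (han : ∀ n : ℕ, (n:ℝ) ≤ a n) {v w : ℝ}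
    (hv : 0 ≤ v) (hvw : v ≤ w) :
    phiAux a w ≤ phiAux a v + (w+2)*(w - v) := by
  have hφv : 0 ≤ phiAux a v := le_trans hv (self_le_phiAux ha0 han v)
  refine ciSup_le fun n => ?_
  have h2 : (0:ℝ) ≤ (n:ℝ) := Nat.cast_nonneg n
  rcases le_or_gt w (a n) with h | h
  · nlinarith
  · have h1 : (n:ℝ) < w := lt_of_le_of_lt (han n) h
    have h3 := le_phiAux han v n
    nlinarith

lemma phiAux_key (ha0 : a 0 = 0) (han : ∀ n : ℕ, (n:ℝ) ≤ a n) {C v : ℝ}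
    (hC : 1 ≤ C) (hstep : ∀ n, 2*C*a n ≤ a (n+1)) (hv : 0 < v) :
    phiAux a (C*v) ≤ 4*C*phiAux a v := by
  have hφv : v ≤ phiAux a v := self_le_phiAux ha0 han v
  refine ciSup_le fun n => ?_
  have h2 : (0:ℝ) ≤ (n:ℝ) := Nat.cast_nonneg n
  rcases le_or_gt (C*v) (a n) with h | h
  · have hterm : ((n:ℝ)+1)*(C*v - a n) ≤ 0 :=
      mul_nonpos_of_nonneg_of_nonpos (by positivity) (by linarith)
    nlinarith
  · cases n with
    | zero => simp only [Nat.cast_zero, ha0]; nlinarith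
    | succ j =>
      have hstepj := hstep j
      have hja : (0:ℝ) ≤ a j := le_trans (Nat.cast_nonneg j) (han j)
      have hj2 : (0:ℝ) ≤ (j:ℝ) := Nat.cast_nonneg j
      have haj1 : (0:ℝ) ≤ a (j+1) := le_trans (Nat.cast_nonneg _) (han (j+1))
      have hφ2 := le_phiAux han v j
      have h4 : 4*C*(((j:ℝ)+1)*(v - a j)) ≤ 4*C*phiAux a v :=
        mul_le_mul_of_nonneg_left hφ2 (by linarith)
      have hmul : (j:ℝ)*a (j+1) ≤ (j:ℝ)*(C*v) :=
        mul_le_mul_of_nonneg_left (le_of_lt h) hj2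
      push_cast
      nlinarith

lemma phiAux_continuousOn (ha0 : a 0 = 0) (han : ∀ n : ℕ, (n:ℝ) ≤ a n) :
    ContinuousOn (phiAux a) (Set.Ici 0) := by
  intro x hx
  simp only [mem_Ici] at hx
  have hlip : LipschitzOnWith (Real.toNNReal (x+3)) (phiAux a) (Set.Icc 0 (x+1)) := by
    refine LipschitzOnWith.of_dist_le_mul fun v hv w hw => ?_
    rcases le_total v w with hvw | hvw
    · have := phiAux_lip ha0 han hv.1 hvw
      have hmono := phiAux_mono han hvw
      rw [Real.dist_eq, Real.dist_eq, abs_of_nonpos (by linarith), abs_of_nonpos (by linarith)]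
      have hc : (Real.toNNReal (x+3) : ℝ) = x+3 := Real.coe_toNNReal _ (by linarith)
      rw [hc]
      have hw2 : w ≤ x+1 := hw.2
      nlinarith
    · have := phiAux_lip ha0 han hw.1 hvw
      have hmono := phiAux_mono han hvw
      rw [Real.dist_eq, Real.dist_eq, abs_of_nonneg (by linarith), abs_of_nonneg (by linarith)]
      have hc : (Real.toNNReal (x+3) : ℝ) = x+3 := Real.coe_toNNReal _ (by linarith)
      rw [hc]
      have hv2 : v ≤ x+1 := hv.2
      nlinarith
  have hcw : ContinuousWithinAt (phiAux a) (Set.Icc 0 (x+1)) x :=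
    hlip.continuousOn x ⟨hx, by linarith⟩
  refine hcw.mono_of_mem_nhdsWithin ?_
  rw [mem_nhdsWithin]
  exact ⟨Set.Iio (x+1), isOpen_Iio, by simp, fun y hy => ⟨hy.2, le_of_lt hy.1⟩⟩

end PhiAux


set_option maxHeartbeats 1000000 in
/-- Lemma 7.1: interpolation of a weight `σ ∈ W₀` between `ω` and
`h`, with prescribed lower bound on the growth index. -/
theorem weight_between_omega_and_h
    (ω : ℝ → ℝ) (hω : InW0 ω) (hγω : 1 < gammaIndex ω)
    (h : ℝ → ℝ) (hpos : ∀ t : ℝ, 0 ≤ t → 0 ≤ h t)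
    (hsmall : ω =o[Filter.atTop] h)
    (γ : ℝ) (hγ0 : 0 < γ) (hγ : ENNReal.ofReal γ < gammaIndex ω) :
    ∃ σ : ℝ → ℝ, InW0 σ ∧ ω =o[Filter.atTop] σ ∧ σ =o[Filter.atTop] h ∧
      ENNReal.ofReal γ < gammaIndex σ := by
  obtain ⟨hωW, hωnorm, hω3, hω4⟩ := hω
  have hωtop := hωW.tendsto_atTop
  have hωmono := hωW.monotoneOn
  -- extract γ' with Pcond ω γ' and γ < γ'
  simp only [gammaIndex, lt_iSup_iff, Set.mem_setOf_eq] at hγ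
  obtain ⟨γ', ⟨hγ'pos, hPω⟩, hγγ'0⟩ := hγ
  have hγγ' : γ < γ' := (ENNReal.ofReal_lt_ofReal_iff hγ'pos).mp hγγ'0
  obtain ⟨K, hK, c, hcK, hev⟩ := hPω
  set c₀ : ℝ := max c 1 with hc₀def
  have hc₀1 : 1 ≤ c₀ := le_max_right _ _
  have hc₀K : c₀ < K := max_lt hcK hK
  have hKpos : (0:ℝ) < K := by linarith
  have hKγ'1 : (1:ℝ) ≤ K ^ γ' := Real.one_le_rpow hK.le hγ'pos.le
  -- threshold T₀
  have hev2 : ∀ᶠ t in atTop, ω (K ^ γ' * t) ≤ c₀ * ω t := by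
    filter_upwards [hev, hωtop.eventually_gt_atTop 0] with t h1 h2
    have h3 := (div_le_iff₀ h2).mp h1
    have h4 : c ≤ c₀ := le_max_left _ _
    nlinarith
  obtain ⟨T₀', hT₀'⟩ := eventually_atTop.1 hev2
  set T₀ : ℝ := max T₀' 1 with hT₀def
  have hT₀1 : (1:ℝ) ≤ T₀ := le_max_right _ _
  have hT₀ : ∀ t, T₀ ≤ t → ω (K ^ γ' * t) ≤ c₀ * ω t := fun t ht =>
    hT₀' t (le_trans (le_max_left _ _) ht)
  -- iterated moderate growth
  have hiter : ∀ j : ℕ, ∀ t, T₀ ≤ t → ω (K ^ (γ' * (j:ℝ)) * t) ≤ c₀ ^ j * ω t := by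
    intro j
    induction j with
    | zero => intro t ht; norm_num
    | succ j ih =>
      intro t ht
      have htpos : (0:ℝ) < t := lt_of_lt_of_le (by linarith) ht
      have hKt : T₀ ≤ K ^ γ' * t := le_trans ht (le_mul_of_one_le_left htpos.le hKγ'1)
      have h5 := ih (K ^ γ' * t) hKt
      have h6 := hT₀ t ht
      have h7 : (0:ℝ) ≤ c₀ ^ j := by positivity
      push_cast
      rw [show γ' * ((j:ℝ)+1) = γ' * (j:ℝ) + γ' from by ring, Real.rpow_add hKpos,
        mul_assoc]
      calc ω (K ^ (γ' * (j:ℝ)) * (K ^ γ' * t)) ≤ c₀ ^ j * ω (K ^ γ' * t) := h5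
        _ ≤ c₀ ^ j * (c₀ * ω t) := mul_le_mul_of_nonneg_left h6 h7
        _ = c₀ ^ (j+1) * ω t := by ring
  -- choose γ'' and m
  set γ'' : ℝ := (γ + γ')/2 with hγ''def
  have hγ''pos : 0 < γ'' := by rw [hγ''def]; linarith
  have hγltγ'' : γ < γ'' := by rw [hγ''def]; linarith
  have hγ''ltγ' : γ'' < γ' := by rw [hγ''def]; linarith
  have hdiv1 : 1 ≤ γ'/γ'' := (one_le_div hγ''pos).2 hγ''ltγ'.le
  have hKp1 : K ≤ K ^ (γ'/γ'') := by
    nth_rewrite 1 [← Real.rpow_one K]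
    exact Real.rpow_le_rpow_of_exponent_le hK.le hdiv1
  have hc₀pos : (0:ℝ) < c₀ := by linarith
  have hr : 1 < K ^ (γ'/γ'') / c₀ := (one_lt_div hc₀pos).2 (lt_of_lt_of_le hc₀K hKp1)
  obtain ⟨m, hm4, hm1⟩ :=
    (((tendsto_pow_atTop_atTop_of_one_lt hr).eventually_gt_atTop 4).and
      (eventually_ge_atTop 1)).exists
  set C : ℝ := c₀ ^ m with hCdef
  have hC1 : 1 ≤ C := one_le_pow₀ hc₀1
  have hCpos : (0:ℝ) < C := by linarith
  set K₁ : ℝ := (K ^ (γ'/γ''))^m with hK₁def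
  have hm4' : 4 * C < K₁ := by
    have hdp : (K ^ (γ'/γ'') / c₀)^m = K₁ / C := div_pow _ _ m
    rw [hdp, lt_div_iff₀ hCpos] at hm4
    linarith
  have hK₁1 : 1 < K₁ := by linarith
  have hK₁γ : K₁ ^ γ'' = K ^ (γ' * (m:ℝ)) := by
    rw [hK₁def, ← Real.rpow_natCast (K ^ (γ'/γ'')) m, ← Real.rpow_mul hKpos.le,
      ← Real.rpow_mul hKpos.le]
    congr 1
    field_simp
  -- choice functions
  have hF' : ∀ b : ℝ, ∃ s : ℝ, ∀ t ≥ s, b ≤ ω t := fun b =>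
    eventually_atTop.1 (hωtop.eventually_ge_atTop b)
  choose F hF using hF'
  have hG' : ∀ n : ℕ, ∃ s : ℝ, ∀ t ≥ s,
      ‖ω t‖ ≤ (1/(((n:ℝ)+1)*((n:ℝ)+2)))*‖h t‖ := fun n =>
    eventually_atTop.1 (hsmall.def (by positivity))
  choose G hG using hG'
  -- the sequence
  set tseq : ℕ → ℝ := fun n => Nat.rec (1:ℝ)
    (fun k tk => max (max (tk + 1) (F (max ((k:ℝ)+1) (2*C*ω tk)))) (G (k+1))) n
    with htseqdef
  have htseq0 : tseq 0 = 1 := rfl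
  have htseqS : ∀ k, tseq (k+1) =
      max (max (tseq k + 1) (F (max ((k:ℝ)+1) (2*C*ω (tseq k))))) (G (k+1)) :=
    fun k => rfl
  have htstep : ∀ k, tseq k + 1 ≤ tseq (k+1) := fun k => by
    rw [htseqS k]; exact le_max_of_le_left (le_max_left _ _)
  have htmono : Monotone tseq := monotone_nat_of_le_succ fun k => by linarith [htstep k]
  have htge : ∀ k : ℕ, (k:ℝ)+1 ≤ tseq k := by
    intro k; induction k with
    | zero => rw [htseq0]; norm_num
    | succ k ih => have := htstep k; push_cast; linarith
  have htpos : ∀ k, (0:ℝ) < tseq k := fun k =>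
    lt_of_lt_of_le (by positivity) (htge k)
  set a : ℕ → ℝ := fun n => ω (tseq n) with hadef
  have ha0 : a 0 = 0 := by
    show ω (tseq 0) = 0
    rw [htseq0]; exact hωnorm 1 ⟨zero_le_one, le_refl 1⟩
  have hFA : ∀ k : ℕ, max ((k:ℝ)+1) (2*C*ω (tseq k)) ≤ a (k+1) := by
    intro k
    refine hF _ (tseq (k+1)) ?_
    rw [htseqS k]; exact le_max_of_le_left (le_max_right _ _)
  have han : ∀ n : ℕ, (n:ℝ) ≤ a n := by
    intro n; cases n with
    | zero => simp [ha0]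
    | succ k =>
      have := le_trans (le_max_left _ _) (hFA k)
      push_cast; linarith
  have hstep : ∀ n, 2*C*a n ≤ a (n+1) := fun n =>
    le_trans (le_max_right _ _) (hFA n)
  have hGle : ∀ k : ℕ, G (k+1) ≤ tseq (k+1) := fun k => by
    rw [htseqS k]; exact le_max_right _ _
  -- the new weight
  set σ : ℝ → ℝ := fun t => phiAux a (ω t) with hσdef
  have hωnonneg : ∀ t : ℝ, 0 ≤ t → 0 ≤ ω t := fun t ht => by
    have := hωmono Set.self_mem_Ici (show t ∈ Set.Ici 0 from ht) ht
    rwa [hωW.map_zero] at this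
  have hσge : ∀ t, ω t ≤ σ t := fun t => self_le_phiAux ha0 han (ω t)
  have hmaps : Set.MapsTo ω (Set.Ici 0) (Set.Ici 0) := fun t ht => hωnonneg t ht
  have hσW : IsWeightFunction σ :=
    { continuousOn := (phiAux_continuousOn ha0 han).comp hωW.continuousOn hmaps
      monotoneOn := fun x hx y hy hxy => phiAux_mono han (hωmono hx hy hxy)
      map_zero := by
        show phiAux a (ω 0) = 0
        rw [hωW.map_zero]; exact phiAux_zero ha0 han
      tendsto_atTop := tendsto_atTop_mono hσge hωtop }
  have hσnorm : ∀ t ∈ Set.Icc (0:ℝ) 1, σ t = 0 := fun t ht => by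
    show phiAux a (ω t) = 0
    rw [hωnorm t ht]; exact phiAux_zero ha0 han
  have hbigO : ω =O[atTop] σ := by
    rw [isBigO_iff]
    refine ⟨1, ?_⟩
    filter_upwards [eventually_ge_atTop (0:ℝ)] with t ht
    rw [one_mul, Real.norm_eq_abs, Real.norm_eq_abs, abs_of_nonneg (hωnonneg t ht),
      abs_of_nonneg (le_trans (hωnonneg t ht) (hσge t))]
    exact hσge t
  have hσ3 : Omega3 σ := hω3.trans_isBigO hbigO
  have hσ4 : Omega4 σ := by
    refine ⟨convex_univ, fun x _ y _ p q hp hq hpq => ?_⟩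
    have h1 := hω4.2 (Set.mem_univ x) (Set.mem_univ y) hp hq hpq
    simp only [smul_eq_mul] at h1 ⊢
    calc phiAux a (ω (Real.exp (p*x + q*y)))
        ≤ phiAux a (p * ω (Real.exp x) + q * ω (Real.exp y)) := phiAux_mono han h1
      _ ≤ p * phiAux a (ω (Real.exp x)) + q * phiAux a (ω (Real.exp y)) :=
          phiAux_convex_ineq han _ _ p q hp hq hpq
  -- ω = o(σ)
  have hlo1 : ω =o[atTop] σ := by
    rw [isLittleO_iff]
    intro ε hε
    set n : ℕ := ⌈2/ε⌉₊ with hndef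
    have hεn : 2 ≤ ε * (n:ℝ) := by
      have h1 : 2/ε ≤ (n:ℝ) := Nat.le_ceil _
      rw [div_le_iff₀ hε] at h1; linarith
    filter_upwards [eventually_ge_atTop (0:ℝ), hωtop.eventually_ge_atTop (2 * a n)]
      with t ht hω2
    have hσ1 : ((n:ℝ)+1)*(ω t - a n) ≤ σ t := le_phiAux han (ω t) n
    have hωt0 : 0 ≤ ω t := hωnonneg t ht
    have hσ0 : 0 ≤ σ t := le_trans hωt0 (hσge t)
    have hann : 0 ≤ a n := le_trans (Nat.cast_nonneg n) (han n)
    rw [Real.norm_eq_abs, Real.norm_eq_abs, abs_of_nonneg hωt0, abs_of_nonneg hσ0]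
    nlinarith [mul_le_mul_of_nonneg_left hσ1 hε.le,
      mul_nonneg (show (0:ℝ) ≤ ε*(n:ℝ) - 2 by linarith)
        (show (0:ℝ) ≤ ω t - a n by linarith),
      mul_nonneg hε.le (show (0:ℝ) ≤ ω t - a n by linarith)]
  -- σ = o(h)
  have hlo2 : σ =o[atTop] h := by
    rw [isLittleO_iff]
    intro ε hε
    set N : ℕ := ⌈1/ε⌉₊ + 1 with hNdef
    have hεN : 1 ≤ ε * (N:ℝ) := by
      have h1 : 1/ε ≤ ((⌈1/ε⌉₊:ℕ):ℝ) := Nat.le_ceil _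
      have h2 : 1/ε ≤ (N:ℝ) := by rw [hNdef]; push_cast; linarith
      rw [div_le_iff₀ hε] at h2; linarith
    have hN1 : 1 ≤ N := by rw [hNdef]; omega
    filter_upwards [eventually_ge_atTop (tseq N)] with t ht
    have hex : ∃ k, t < tseq k := by
      refine ⟨⌈t⌉₊, ?_⟩
      have h1 := htge ⌈t⌉₊
      have h2 : t ≤ (⌈t⌉₊:ℝ) := Nat.le_ceil t
      linarith
    have hk := Nat.find_spec hex
    have hNk : N < Nat.find hex := by
      by_contra hc
      push_neg at hc
      exact absurd (lt_of_lt_of_le hk (htmono hc)) (not_lt.2 ht)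
    obtain ⟨m', hm'⟩ : ∃ m', Nat.find hex = m' + 1 := ⟨Nat.find hex - 1, by omega⟩
    have h2 : t < tseq (m'+1) := hm' ▸ hk
    have h1 : tseq m' ≤ t := not_lt.1 (Nat.find_min hex (by omega))
    have hNm : N ≤ m' := by omega
    have ht0 : (0:ℝ) ≤ t := le_trans (htpos N).le ht
    have hωt0 := hωnonneg t ht0
    have hσm : σ t ≤ ((m':ℝ)+1) * ω t := by
      refine phiAux_le fun j => ?_
      rcases le_or_gt j m' with hj | hj
      · have hja : (0:ℝ) ≤ a j := le_trans (Nat.cast_nonneg j) (han j)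
        have hjm : (j:ℝ) ≤ (m':ℝ) := Nat.cast_le.2 hj
        nlinarith
      · have haj : ω t ≤ a j := by
          have hta : t ≤ tseq j := le_trans h2.le (htmono hj)
          exact hωmono ht0 (htpos j).le hta
        have hterm : ((j:ℝ)+1)*(ω t - a j) ≤ 0 :=
          mul_nonpos_of_nonneg_of_nonpos (by positivity) (by linarith)
        nlinarith [mul_nonneg (show (0:ℝ) ≤ (m':ℝ)+1 by positivity) hωt0]
    have hmGe : G m' ≤ tseq m' := by
      obtain ⟨i, rfl⟩ : ∃ i, m' = i + 1 := ⟨m' - 1, by omega⟩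
      exact hGle i
    have hωh := hG m' t (le_trans hmGe h1)
    rw [Real.norm_eq_abs, Real.norm_eq_abs, abs_of_nonneg hωt0,
      abs_of_nonneg (hpos t ht0)] at hωh
    have hD : (0:ℝ) < ((m':ℝ)+1)*((m':ℝ)+2) := by positivity
    rw [one_div, inv_mul_eq_div, le_div_iff₀ hD] at hωh
    have hσ0 : 0 ≤ σ t := le_trans hωt0 (hσge t)
    rw [Real.norm_eq_abs, Real.norm_eq_abs, abs_of_nonneg hσ0,
      abs_of_nonneg (hpos t ht0)]
    have hmN : (N:ℝ) ≤ (m':ℝ) := Nat.cast_le.2 hNm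
    have hεm : 1 ≤ ε * (m':ℝ) := by nlinarith
    nlinarith [mul_le_mul_of_nonneg_left hωh hε.le,
      mul_nonneg (show (0:ℝ) ≤ ε*(m':ℝ) + 2*ε - 1 by linarith)
        (mul_nonneg (show (0:ℝ) ≤ (m':ℝ)+1 by positivity) hωt0)]
  -- Pcond σ γ''
  have hPσ : Pcond σ γ'' := by
    refine ⟨K₁, hK₁1, 4*C, hm4', ?_⟩
    filter_upwards [eventually_ge_atTop T₀, hωtop.eventually_gt_atTop 0] with t ht hωt
    have h1 : ω (K₁ ^ γ'' * t) ≤ C * ω t := by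
      rw [hK₁γ]
      exact hiter m t ht
    have h2 : σ (K₁ ^ γ'' * t) ≤ phiAux a (C * ω t) := phiAux_mono han h1
    have h3 : phiAux a (C * ω t) ≤ 4*C*phiAux a (ω t) :=
      phiAux_key ha0 han hC1 hstep hωt
    have hσpos : 0 < σ t := lt_of_lt_of_le hωt (hσge t)
    rw [div_le_iff₀ hσpos]
    exact le_trans h2 h3
  refine ⟨σ, ⟨hσW, hσnorm, hσ3, hσ4⟩, hlo1, hlo2, ?_⟩
  have hle : ENNReal.ofReal γ'' ≤ gammaIndex σ :=
    le_iSup₂ (f := fun x (_ : x ∈ {g : ℝ | 0 < g ∧ Pcond σ g}) => ENNReal.ofReal x)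
      γ'' ⟨hγ''pos, hPσ⟩
  exact lt_of_lt_of_le ((ENNReal.ofReal_lt_ofReal_iff hγ''pos).2 hγltγ'') hle
end

section
/- Let ω be a weight function with (ω_5) and γ((ω⋆)^ι) > 1. Then ∫_{−∞}^{+∞} ω⋆(|t|)/(1+t²) dt < +∞. -/
open Filter MeasureTheory Set Asymptotics

section Aux

variable {ω : ℝ → ℝ}

lemma uc_mem {s t : ℝ} (ht : 0 ≤ t) :
    ω t - s * t ∈ (fun t : ℝ => ω t - s * t) '' Set.Ici 0 :=
  ⟨t, ht, rfl⟩

lemma uc_nonneg_aux (hω : IsWeightFunction ω) {x : ℝ} (hx : 0 ≤ x) : 0 ≤ ω x := by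
  have := hω.monotoneOn (Set.self_mem_Ici) hx hx
  rwa [hω.map_zero] at this

lemma uc_bddAbove (hω : IsWeightFunction ω) (h5 : Omega5 ω) {s : ℝ} (hs : 0 < s) :
    BddAbove ((fun t : ℝ => ω t - s * t) '' Set.Ici 0) := by
  obtain ⟨T, hT⟩ := Filter.eventually_atTop.1 (h5.def (half_pos hs))
  set B := max T 0 with hB
  refine ⟨ω B, ?_⟩
  rintro x ⟨t, ht, rfl⟩
  simp only [Set.mem_Ici] at ht
  show ω t - s * t ≤ ω B
  rcases le_or_gt t B with h | h
  · have h1 : ω t ≤ ω B := hω.monotoneOn ht (le_max_right T 0) h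
    nlinarith
  · have hTt : T ≤ t := le_trans (le_max_left T 0) h.le
    have := hT t hTt
    rw [Real.norm_eq_abs, Real.norm_eq_abs, abs_of_nonneg ht] at this
    have h2 : ω t ≤ s / 2 * t := (le_abs_self _).trans this
    have h3 : 0 ≤ ω B := uc_nonneg_aux hω (le_max_right T 0)
    nlinarith

lemma uc_nonneg (hω : IsWeightFunction ω) (h5 : Omega5 ω) {s : ℝ} (hs : 0 < s) :
    0 ≤ upperConj ω s := by
  have h0 : ω 0 - s * 0 = 0 := by rw [hω.map_zero]; ring
  have := le_csSup (uc_bddAbove hω h5 hs) (uc_mem (s := s) (le_refl (0:ℝ)))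
  rw [h0] at this
  exact this

lemma uc_le (hω : IsWeightFunction ω) (h5 : Omega5 ω) {s t : ℝ} (hs : 0 < s) (ht : 0 ≤ t) :
    ω t - s * t ≤ upperConj ω s :=
  le_csSup (uc_bddAbove hω h5 hs) (uc_mem ht)

lemma uc_anti (hω : IsWeightFunction ω) (h5 : Omega5 ω) {s₁ s₂ : ℝ}
    (h1 : 0 < s₁) (h12 : s₁ ≤ s₂) : upperConj ω s₂ ≤ upperConj ω s₁ := by
  refine csSup_le ⟨ω 0 - s₂ * 0, uc_mem (le_refl (0:ℝ))⟩ ?_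
  rintro x ⟨t, ht, rfl⟩
  simp only [Set.mem_Ici] at ht
  show ω t - s₂ * t ≤ upperConj ω s₁
  calc ω t - s₂ * t ≤ ω t - s₁ * t := by nlinarith
    _ ≤ upperConj ω s₁ := uc_le hω h5 h1 ht

end Aux

/-- Lemma 2.1.2 analogue: convergence of
`∫_{−∞}^{+∞} ω⋆(|t|)/(1+t²) dt`. -/
theorem upperConj_poisson_integrable
    (ω : ℝ → ℝ) (hω : IsWeightFunction ω) (h5 : Omega5 ω)
    (hγι : 1 < gammaIndex (upperConjIota ω)) :
    (∫⁻ t : ℝ, ENNReal.ofReal (upperConj ω |t| / (1 + t ^ 2))) < ⊤ := by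
  classical
  -- Step 1: extract `γ > 1` with `Pcond`
  simp only [gammaIndex, lt_iSup_iff] at hγι
  obtain ⟨γ, hmem, hγ1'⟩ := hγι
  obtain ⟨hγpos, K, hK1, c, hcK, hev⟩ := hmem
  have hγ1 : (1:ℝ) < γ := ENNReal.one_lt_ofReal.1 hγ1'
  set Q := K ^ γ with hQdef
  have hKpos : (0:ℝ) < K := lt_trans one_pos hK1
  have hKQ : K < Q := by
    calc K = K ^ (1:ℝ) := (Real.rpow_one K).symm
      _ < K ^ γ := (Real.rpow_lt_rpow_left_iff hK1).2 hγ1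
  have hQ1 : 1 < Q := lt_trans hK1 hKQ
  have hQ0 : (0:ℝ) < Q := lt_trans one_pos hQ1
  obtain ⟨T₀, hT₀⟩ := Filter.eventually_atTop.1 hev
  obtain ⟨T₂, hT₂⟩ := Filter.eventually_atTop.1 (hω.tendsto_atTop.eventually_ge_atTop 2)
  set t₀ := max T₂ 1 with ht₀def
  have ht₀1 : (1:ℝ) ≤ t₀ := le_max_right _ _
  have hωt₀ : 2 ≤ ω t₀ := hT₂ t₀ (le_max_left _ _)
  have hlower : ∀ t : ℝ, t₀ ≤ t → 1 ≤ upperConjIota ω t := by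
    intro t ht
    have htpos : 0 < t := lt_of_lt_of_le (lt_of_lt_of_le one_pos ht₀1) ht
    rw [upperConjIota, if_neg htpos.ne']
    have h1 : ω t₀ - (1/t) * t₀ ≤ upperConj ω (1/t) :=
      uc_le hω h5 (by positivity) (le_trans zero_le_one ht₀1)
    have h2 : (1/t) * t₀ ≤ 1 := by
      rw [div_mul_eq_mul_div, one_mul, div_le_one htpos]; exact ht
    linarith
  set T := max (max T₀ t₀) 1 with hTdef
  have hT1 : (1:ℝ) ≤ T := le_max_right _ _
  have hTpos : (0:ℝ) < T := lt_of_lt_of_le one_pos hT1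
  set c' := max c 1 with hc'def
  have hc'1 : (1:ℝ) ≤ c' := le_max_right _ _
  have hc'pos : (0:ℝ) < c' := lt_of_lt_of_le one_pos hc'1
  have hc'Q : c' < Q := max_lt (lt_trans hcK hKQ) hQ1
  have hstep : ∀ t : ℝ, T ≤ t → upperConj ω (1 / (Q * t)) ≤ c' * upperConj ω (1 / t) := by
    intro t ht
    have htpos : 0 < t := lt_of_lt_of_le hTpos ht
    have ht₀t : t₀ ≤ t := le_trans (le_trans (le_max_right T₀ t₀) (le_max_left _ 1)) ht
    have hden : 1 ≤ upperConjIota ω t := hlower t ht₀t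
    have hdpos : 0 < upperConjIota ω t := lt_of_lt_of_le one_pos hden
    have hratio := hT₀ t (le_trans (le_trans (le_max_left T₀ t₀) (le_max_left _ 1)) ht)
    have h1 : upperConjIota ω (Q * t) ≤ c * upperConjIota ω t := (div_le_iff₀ hdpos).1 hratio
    have h2 : c * upperConjIota ω t ≤ c' * upperConjIota ω t :=
      mul_le_mul_of_nonneg_right (le_max_left c 1) hdpos.le
    have h3 := h1.trans h2
    have hQtpos : 0 < Q * t := by positivity
    simpa only [upperConjIota, if_neg hQtpos.ne', if_neg htpos.ne'] using h3
  set s₀ := 1 / T with hs₀def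
  have hs₀pos : 0 < s₀ := by positivity
  have hiter : ∀ n : ℕ, upperConj ω (s₀ / Q ^ n) ≤ c' ^ n * upperConj ω s₀ := by
    intro n
    induction n with
    | zero => simp
    | succ n ih =>
      have hQn : (1:ℝ) ≤ Q ^ n := one_le_pow₀ hQ1.le
      have hTn : T ≤ Q ^ n * T := le_mul_of_one_le_left hTpos.le hQn
      have harg : s₀ / Q ^ (n+1) = 1 / (Q * (Q ^ n * T)) := by
        rw [hs₀def, div_div]; congr 1; ring
      have harg2 : s₀ / Q ^ n = 1 / (Q ^ n * T) := by
        rw [hs₀def, div_div]; congr 1; ring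
      calc upperConj ω (s₀ / Q ^ (n+1)) = upperConj ω (1 / (Q * (Q ^ n * T))) := by rw [harg]
        _ ≤ c' * upperConj ω (1 / (Q ^ n * T)) := hstep _ hTn
        _ = c' * upperConj ω (s₀ / Q ^ n) := by rw [harg2]
        _ ≤ c' * (c' ^ n * upperConj ω s₀) := mul_le_mul_of_nonneg_left ih hc'pos.le
        _ = c' ^ (n+1) * upperConj ω s₀ := by ring
  set α := Real.logb Q c' with hαdef
  have hα0 : 0 ≤ α := Real.logb_nonneg hQ1 hc'1
  have hα1 : α < 1 := by
    rw [hαdef, Real.logb_lt_iff_lt_rpow hQ1 hc'pos, Real.rpow_one]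
    exact hc'Q
  set M := max (upperConj ω s₀) 1 with hMdef
  have hM1 : (1:ℝ) ≤ M := le_max_right _ _
  have hMpos : (0:ℝ) < M := lt_of_lt_of_le one_pos hM1
  set C := (Q * s₀) ^ α * M with hCdef
  have hCpos : 0 < C := by positivity
  have hkey : ∀ s : ℝ, 0 < s → s ≤ s₀ → upperConj ω s ≤ C * s ^ (-α) := by
    intro s hs hss₀
    have hratio1 : (1:ℝ) ≤ s₀ / s := (one_le_div hs).2 hss₀
    have hratiopos : 0 < s₀ / s := by positivity
    set n := Nat.floor (Real.logb Q (s₀ / s)) with hndef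
    have hlogn : (n:ℝ) ≤ Real.logb Q (s₀ / s) := Nat.floor_le (Real.logb_nonneg hQ1 hratio1)
    have hlogn2 : Real.logb Q (s₀ / s) < (n:ℝ) + 1 := by
      exact_mod_cast Nat.lt_floor_add_one (Real.logb Q (s₀ / s))
    have hub : s₀ / s < Q ^ ((n:ℝ) + 1) := (Real.logb_lt_iff_lt_rpow hQ1 hratiopos).1 hlogn2
    have hlb : Q ^ (n:ℝ) ≤ s₀ / s := by
      calc Q ^ (n:ℝ) ≤ Q ^ Real.logb Q (s₀ / s) := (Real.rpow_le_rpow_left_iff hQ1).2 hlogn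
        _ = s₀ / s := Real.rpow_logb hQ0 (ne_of_gt hQ1) hratiopos
    have hQn1pos : (0:ℝ) < Q ^ ((n:ℝ)+1) := Real.rpow_pos_of_pos hQ0 _
    have hs_lb : s₀ / Q ^ ((n:ℝ)+1) ≤ s := by
      rw [div_le_iff₀ hQn1pos]
      rw [div_lt_iff₀ hs] at hub
      linarith
    have hrpow_npow : Q ^ ((n:ℝ)+1) = Q ^ (n+1 : ℕ) := by
      rw [← Real.rpow_natCast Q (n+1)]
      norm_num
    have h1 : upperConj ω s ≤ upperConj ω (s₀ / Q ^ (n+1 : ℕ)) := by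
      refine uc_anti hω h5 (by positivity) ?_
      rw [← hrpow_npow]; exact hs_lb
    have h2 : upperConj ω (s₀ / Q ^ (n+1:ℕ)) ≤ c' ^ (n+1) * upperConj ω s₀ := hiter (n+1)
    have h3 : upperConj ω s₀ ≤ M := le_max_left _ _
    have hcM : c' ^ (n+1) * upperConj ω s₀ ≤ c' ^ (n+1) * M :=
      mul_le_mul_of_nonneg_left h3 (by positivity)
    have hc'eq : c' = Q ^ α := (Real.rpow_logb hQ0 (ne_of_gt hQ1) hc'pos).symm
    have hpow : (c':ℝ) ^ (n+1:ℕ) = (Q ^ ((n:ℝ)+1)) ^ α := by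
      rw [hc'eq, ← Real.rpow_natCast (Q ^ α) (n+1), ← Real.rpow_mul hQ0.le,
        ← Real.rpow_mul hQ0.le]
      congr 1
      push_cast
      ring
    have hQbound : Q ^ ((n:ℝ)+1) ≤ Q * (s₀ / s) := by
      rw [Real.rpow_add hQ0, Real.rpow_one]
      calc Q ^ (n:ℝ) * Q ≤ (s₀/s) * Q := mul_le_mul_of_nonneg_right hlb hQ0.le
        _ = Q * (s₀/s) := mul_comm _ _
    have h4 : (Q ^ ((n:ℝ)+1)) ^ α ≤ (Q * (s₀/s)) ^ α :=
      Real.rpow_le_rpow hQn1pos.le hQbound hα0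
    have h5' : (Q * (s₀/s)) ^ α = (Q * s₀) ^ α * s ^ (-α) := by
      rw [show Q * (s₀/s) = (Q * s₀) * s⁻¹ by rw [div_eq_mul_inv]; ring,
        Real.mul_rpow (by positivity) (by positivity),
        Real.inv_rpow hs.le, Real.rpow_neg hs.le]
    calc upperConj ω s ≤ c' ^ (n+1) * M := le_trans h1 (le_trans h2 hcM)
      _ = (Q ^ ((n:ℝ)+1)) ^ α * M := by rw [hpow]
      _ ≤ (Q * (s₀/s)) ^ α * M := mul_le_mul_of_nonneg_right h4 hMpos.le
      _ = (Q * s₀) ^ α * s ^ (-α) * M := by rw [h5']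
      _ = C * s ^ (-α) := by rw [hCdef]; ring
  -- majorant
  set f : ℝ → ℝ := fun t =>
    Set.indicator (Set.Icc (-s₀) s₀) (fun t => C * |t| ^ (-α)) t + M * (1 + t^2)⁻¹ with hfdef
  have hint1 : MeasureTheory.IntegrableOn (fun t : ℝ => |t| ^ (-α)) (Set.Icc 0 s₀) := by
    rw [integrableOn_Icc_iff_integrableOn_Ioc]
    have hI := intervalIntegral.intervalIntegrable_rpow' (a := 0) (b := s₀) (r := -α)
      (by linarith)
    rw [intervalIntegrable_iff, Set.uIoc_of_le hs₀pos.le] at hI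
    refine hI.congr_fun ?_ measurableSet_Ioc
    intro x hx
    show x ^ (-α) = |x| ^ (-α)
    rw [abs_of_pos hx.1]
  have hIc : IntervalIntegrable (fun t : ℝ => |t| ^ (-α)) MeasureTheory.volume 0 s₀ := by
    rw [intervalIntegrable_iff, Set.uIoc_of_le hs₀pos.le]
    exact hint1.mono_set Set.Ioc_subset_Icc_self
  have hIc2 : IntervalIntegrable (fun t : ℝ => |t| ^ (-α)) MeasureTheory.volume (-s₀) 0 := by
    have h := (IntervalIntegrable.iff_comp_neg (f := fun t : ℝ => |t| ^ (-α)) (a := 0) (b := s₀) (by simp)).1 hIc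
    simp only [abs_neg, neg_zero] at h
    exact h.symm
  have hint2 : MeasureTheory.IntegrableOn (fun t : ℝ => |t| ^ (-α)) (Set.Icc (-s₀) 0) := by
    rw [integrableOn_Icc_iff_integrableOn_Ioc]
    rw [intervalIntegrable_iff, Set.uIoc_of_le (by linarith : -s₀ ≤ (0:ℝ))] at hIc2
    exact hIc2
  have hintabs : MeasureTheory.IntegrableOn (fun t : ℝ => |t| ^ (-α)) (Set.Icc (-s₀) s₀) := by
    refine (hint2.union hint1).mono_set ?_
    intro x hx
    rcases le_or_gt x 0 with h | h
    · exact Or.inl ⟨hx.1, h⟩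
    · exact Or.inr ⟨h.le, hx.2⟩
  have hfint : MeasureTheory.Integrable f := by
    refine MeasureTheory.Integrable.add ?_ (integrable_inv_one_add_sq.const_mul M)
    rw [MeasureTheory.integrable_indicator_iff measurableSet_Icc]
    exact hintabs.const_mul C
  have hbound : ∀ᵐ t : ℝ, ENNReal.ofReal (upperConj ω |t| / (1 + t ^ 2)) ≤
      ENNReal.ofReal (f t) := by
    have hne : ∀ᵐ (t : ℝ), t ≠ 0 := by
      rw [MeasureTheory.ae_iff]
      have : {a : ℝ | ¬a ≠ 0} = {0} := by ext x; simp
      rw [this]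
      exact MeasureTheory.measure_singleton 0
    filter_upwards [hne] with t ht
    have htabs : 0 < |t| := abs_pos.2 ht
    have ht2 : (0:ℝ) < 1 + t^2 := by positivity
    have hucnn : 0 ≤ upperConj ω |t| := uc_nonneg hω h5 htabs
    apply ENNReal.ofReal_le_ofReal
    rcases le_or_gt |t| s₀ with hle | hgt
    · have hmem : t ∈ Set.Icc (-s₀) s₀ := by
        obtain ⟨ha, hb⟩ := abs_le.1 hle
        exact ⟨ha, hb⟩
      have hd : upperConj ω |t| / (1+t^2) ≤ upperConj ω |t| :=
        div_le_self hucnn (by nlinarith)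
      have h2 : upperConj ω |t| ≤ C * |t| ^ (-α) := hkey _ htabs hle
      have h3 : (0:ℝ) ≤ M * (1+t^2)⁻¹ := by positivity
      simp only [hfdef, Set.indicator_of_mem hmem]
      linarith
    · have h2 : upperConj ω |t| ≤ M :=
        le_trans (uc_anti hω h5 hs₀pos hgt.le) (le_max_left _ _)
      have h3 : upperConj ω |t| / (1+t^2) ≤ M * (1+t^2)⁻¹ := by
        rw [div_eq_mul_inv]
        exact mul_le_mul_of_nonneg_right h2 (by positivity)
      have h4 : 0 ≤ Set.indicator (Set.Icc (-s₀) s₀) (fun t => C * |t| ^ (-α)) t :=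
        Set.indicator_nonneg (fun x _ => by positivity) t
      simp only [hfdef]
      linarith
  calc (∫⁻ t : ℝ, ENNReal.ofReal (upperConj ω |t| / (1 + t ^ 2)))
      ≤ ∫⁻ t : ℝ, ENNReal.ofReal (f t) := MeasureTheory.lintegral_mono_ae hbound
    _ < ⊤ := hfint.lintegral_lt_top
end

section
/- Let ω be a weight function with (ω_5). Then γ((ω⋆)^ι) > 1 if and only if there exists C ≥ 1 such that for all y > 0: ∫₀¹ ω⋆(ty) dt ≤ C(ω⋆(y) + 1) (equivalently, ∫₀¹ −ω⋆(ty) dt ≥ −C(ω⋆(y)+1)). -/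
open Filter MeasureTheory Set Asymptotics

namespace GammaAux


variable {ω : ℝ → ℝ}

lemma conj_zero_mem (hω : IsWeightFunction ω) (s : ℝ) :
    (0:ℝ) ∈ (fun t : ℝ => ω t - s * t) '' Set.Ici 0 :=
  ⟨0, Set.self_mem_Ici, by simp [hω.map_zero]⟩

lemma conj_bddAbove (hω : IsWeightFunction ω) (h5 : Omega5 ω) {s : ℝ} (hs : 0 < s) :
    BddAbove ((fun t : ℝ => ω t - s * t) '' Set.Ici 0) := by
  have h2 : (0:ℝ) < s / 2 := by positivity
  obtain ⟨T, hT⟩ := Filter.eventually_atTop.mp (h5.def h2)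
  set T₀ := max T 0 with hT₀def
  refine ⟨max (ω T₀) 0, ?_⟩
  rintro x ⟨t, ht, rfl⟩
  have ht' : (0:ℝ) ≤ t := ht
  rcases le_total t T₀ with h | h
  · have h1 : ω t ≤ ω T₀ := hω.monotoneOn ht (le_max_right T 0) h
    have : ω t - s * t ≤ ω T₀ := by nlinarith [mul_nonneg hs.le ht']
    exact this.trans (le_max_left _ _)
  · have h1 : ‖ω t‖ ≤ s/2 * ‖t‖ := hT t ((le_max_left T 0).trans h)
    have ht0 : (0:ℝ) ≤ t := ht'
    rw [Real.norm_eq_abs, Real.norm_eq_abs, abs_of_nonneg ht0] at h1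
    have h3 : ω t ≤ s/2 * t := (le_abs_self _).trans h1
    have : ω t - s * t ≤ 0 := by nlinarith
    exact this.trans (le_max_right _ _)

lemma le_upperConj (hω : IsWeightFunction ω) (h5 : Omega5 ω) {s : ℝ} (hs : 0 < s)
    {t : ℝ} (ht : 0 ≤ t) : ω t - s * t ≤ upperConj ω s :=
  le_csSup (conj_bddAbove hω h5 hs) ⟨t, ht, rfl⟩

lemma upperConj_nonneg (hω : IsWeightFunction ω) (h5 : Omega5 ω) {s : ℝ} (hs : 0 < s) :
    0 ≤ upperConj ω s := by
  have := le_upperConj hω h5 hs (le_refl 0)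
  simpa [hω.map_zero] using this

lemma upperConj_le_of (hω : IsWeightFunction ω) {s B : ℝ}
    (h : ∀ t : ℝ, 0 ≤ t → ω t - s * t ≤ B) : upperConj ω s ≤ B :=
  csSup_le ⟨0, conj_zero_mem hω s⟩ (by rintro x ⟨t, ht, rfl⟩; exact h t ht)

lemma upperConj_antitone (hω : IsWeightFunction ω) (h5 : Omega5 ω) {s₁ s₂ : ℝ}
    (h1 : 0 < s₁) (h : s₁ ≤ s₂) : upperConj ω s₂ ≤ upperConj ω s₁ :=
  upperConj_le_of hω fun t ht =>
    le_trans (by nlinarith [mul_le_mul_of_nonneg_right h ht]) (le_upperConj hω h5 h1 ht)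

lemma exists_ge_one (hω : IsWeightFunction ω) (h5 : Omega5 ω) :
    ∃ y₁ : ℝ, 0 < y₁ ∧ ∀ s : ℝ, 0 < s → s ≤ y₁ → 1 ≤ upperConj ω s := by
  obtain ⟨T, hT⟩ := Filter.eventually_atTop.mp (hω.tendsto_atTop.eventually (eventually_ge_atTop 2))
  set T₀ := max T 1 with hT₀def
  have hT₀ : (0:ℝ) < T₀ := lt_of_lt_of_le one_pos (le_max_right _ _)
  refine ⟨1/T₀, by positivity, fun s hs hsle => ?_⟩
  have h2 : 2 ≤ ω T₀ := hT T₀ (le_max_left _ _)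
  have h3 := le_upperConj hω h5 hs (le_of_lt hT₀)
  rw [le_div_iff₀ hT₀] at hsle
  linarith

lemma exists_measurable_version (hω : IsWeightFunction ω) (h5 : Omega5 ω) :
    ∃ g : ℝ → ENNReal, Measurable g ∧ ∀ v : ℝ, 0 < v → g v = ENNReal.ofReal (upperConj ω v) := by
  refine ⟨fun v => ENNReal.ofReal (upperConj ω (Real.exp (Real.log v))), ?_, ?_⟩
  · apply ENNReal.measurable_ofReal.comp
    have hanti : Antitone fun x : ℝ => upperConj ω (Real.exp x) := fun a b hab =>
      upperConj_antitone hω h5 (Real.exp_pos a) (Real.exp_le_exp.mpr hab)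
    exact hanti.measurable.comp Real.measurable_log
  · intro v hv
    simp only []
    rw [Real.exp_log hv]

lemma setLIntegral_mono_nomeas {f g : ℝ → ENNReal} {s : Set ℝ} (hs : MeasurableSet s)
    (h : ∀ x ∈ s, f x ≤ g x) : ∫⁻ x in s, f x ≤ ∫⁻ x in s, g x := by
  rw [← lintegral_indicator hs, ← lintegral_indicator hs]
  refine lintegral_mono fun x => ?_
  by_cases hx : x ∈ s
  · simpa [Set.indicator_of_mem hx] using h x hx
  · simp [Set.indicator_of_notMem hx]

lemma setLIntegral_le_const' {f : ℝ → ENNReal} {s : Set ℝ} (hs : MeasurableSet s) {c : ENNReal}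
    (h : ∀ x ∈ s, f x ≤ c) : ∫⁻ x in s, f x ≤ c * volume s := by
  calc ∫⁻ x in s, f x ≤ ∫⁻ _ in s, c := setLIntegral_mono_nomeas hs h
  _ = c * volume s := by rw [setLIntegral_const]

lemma const_le_setLIntegral {f : ℝ → ENNReal} {s : Set ℝ} (hs : MeasurableSet s) {c : ENNReal}
    (h : ∀ x ∈ s, c ≤ f x) : c * volume s ≤ ∫⁻ x in s, f x := by
  calc c * volume s = ∫⁻ _ in s, c := by rw [setLIntegral_const]
  _ ≤ ∫⁻ x in s, f x := setLIntegral_mono_nomeas hs h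

lemma lintegral_scale {g : ℝ → ENNReal} (hg : Measurable g) {y : ℝ} (hy : 0 < y) :
    ∫⁻ u in Set.Ioc (0:ℝ) 1, g (u * y) =
      ENNReal.ofReal (1/y) * ∫⁻ v in Set.Ioc (0:ℝ) y, g v := by
  have hmem : ∀ u : ℝ, (u ∈ Set.Ioc (0:ℝ) 1) ↔ (y * u ∈ Set.Ioc (0:ℝ) y) := by
    intro u
    simp only [Set.mem_Ioc]
    constructor
    · rintro ⟨h1, h2⟩
      exact ⟨by positivity, by nlinarith⟩
    · rintro ⟨h1, h2⟩
      have hu : 0 < u := by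
        rcases mul_pos_iff.mp h1 with ⟨_, h⟩ | ⟨h, _⟩
        · exact h
        · exact absurd h (not_lt.mpr hy.le)
      exact ⟨hu, by nlinarith⟩
  set h : ℝ → ENNReal := (Set.Ioc (0:ℝ) y).indicator g with hdef
  have hhm : Measurable h := hg.indicator measurableSet_Ioc
  have key : ∫⁻ u, h (y * u) = ∫⁻ v, h v ∂(Measure.map (y * ·) volume) :=
    (lintegral_map hhm (measurable_const_mul y)).symm
  rw [Real.map_volume_mul_left (ne_of_gt hy)] at key
  have habs : |y⁻¹| = 1/y := by rw [abs_of_pos (inv_pos.mpr hy), one_div]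
  calc ∫⁻ u in Set.Ioc (0:ℝ) 1, g (u * y)
      = ∫⁻ u, (Set.Ioc (0:ℝ) 1).indicator (fun u => g (u * y)) u := (lintegral_indicator measurableSet_Ioc _).symm
  _ = ∫⁻ u, h (y * u) := by
      refine lintegral_congr fun u => ?_
      by_cases hu : u ∈ Set.Ioc (0:ℝ) 1
      · rw [Set.indicator_of_mem hu, hdef, Set.indicator_of_mem ((hmem u).mp hu), mul_comm]
      · rw [Set.indicator_of_notMem hu, hdef, Set.indicator_of_notMem (fun hc => hu ((hmem u).mpr hc))]
  _ = ENNReal.ofReal (1/y) * ∫⁻ v, h v := by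
      rw [key, lintegral_smul_measure, habs, smul_eq_mul]
  _ = ENNReal.ofReal (1/y) * ∫⁻ v in Set.Ioc (0:ℝ) y, g v := by
      rw [hdef, lintegral_indicator measurableSet_Ioc]


variable {ω : ℝ → ℝ}

lemma forward (hω : IsWeightFunction ω) (h5 : Omega5 ω) {γ K c : ℝ} (hγ : 1 < γ)
    (hK : 1 < K) (hcK : c < K)
    (hev : ∀ᶠ t : ℝ in Filter.atTop, upperConjIota ω (K ^ γ * t) / upperConjIota ω t ≤ c) :
    ∃ C : ℝ, 1 ≤ C ∧ ∀ y : ℝ, 0 < y →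
      (∫⁻ t in Set.Ioc (0:ℝ) 1, ENNReal.ofReal (upperConj ω (t * y))) ≤
        ENNReal.ofReal (C * (upperConj ω y + 1)) := by
  obtain ⟨y₁, hy₁pos, hy₁⟩ := exists_ge_one hω h5
  set c' := max c 1 with hc'def
  have hc'1 : (1:ℝ) ≤ c' := le_max_right _ _
  have hc'K : c' < K := max_lt hcK hK
  set l := K ^ γ with hldef
  have hKl : K ≤ l := by
    calc K = K ^ (1:ℝ) := (Real.rpow_one K).symm
    _ ≤ K ^ γ := Real.rpow_le_rpow_of_exponent_le hK.le hγ.le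
  have hl1 : 1 < l := lt_of_lt_of_le hK hKl
  have hlpos : 0 < l := lt_trans one_pos hl1
  have hlne : l ≠ 0 := ne_of_gt hlpos
  have hc'l : c' < l := lt_of_lt_of_le hc'K hKl
  obtain ⟨t₀, ht₀⟩ := Filter.eventually_atTop.mp hev
  set t₁ := max t₀ (max (1/y₁) 1) with ht₁def
  have ht₁pos : 0 < t₁ := lt_of_lt_of_le one_pos ((le_max_right _ 1).trans (le_max_right _ _))
  set s₀ := 1/t₁ with hs₀def
  have hs₀pos : 0 < s₀ := by positivity
  have hs₀y₁ : s₀ ≤ y₁ := by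
    rw [hs₀def, div_le_iff₀ ht₁pos]
    have h1 : 1/y₁ ≤ t₁ := (le_max_left _ _).trans (le_max_right _ _)
    rw [div_le_iff₀ hy₁pos] at h1
    linarith
  have hstep : ∀ s : ℝ, 0 < s → s ≤ s₀ → upperConj ω (s / l) ≤ c' * upperConj ω s := by
    intro s hs hsle
    have htge : t₀ ≤ 1/s := by
      have h1 : t₁ ≤ 1/s := by
        rw [le_div_iff₀ hs]
        rw [hs₀def, le_div_iff₀ ht₁pos] at hsle
        linarith
      exact (le_max_left _ _).trans h1
    have hts : (0:ℝ) < 1/s := by positivity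
    have hdiv := ht₀ (1/s) htge
    have h1 : upperConjIota ω (1/s) = upperConj ω s := by
      rw [upperConjIota, if_neg (ne_of_gt hts), one_div_one_div]
    have h2 : upperConjIota ω (K ^ γ * (1/s)) = upperConj ω (s / l) := by
      rw [upperConjIota, if_neg (ne_of_gt (by positivity))]
      rw [← hldef]
      congr 1
      field_simp
    have hσpos : (0:ℝ) < upperConj ω s :=
      lt_of_lt_of_le one_pos (hy₁ s hs (hsle.trans hs₀y₁))
    rw [h1, h2] at hdiv
    have h3 := (div_le_iff₀ hσpos).mp hdiv
    calc upperConj ω (s / l) ≤ c * upperConj ω s := h3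
    _ ≤ c' * upperConj ω s := mul_le_mul_of_nonneg_right (le_max_left _ _) hσpos.le
  have hiter : ∀ n : ℕ, ∀ s : ℝ, 0 < s → s ≤ s₀ →
      upperConj ω (l⁻¹ ^ n * s) ≤ c' ^ n * upperConj ω s := by
    intro n
    induction n with
    | zero => intro s hs _; simp
    | succ n ih =>
      intro s hs hsle
      have hb : (0:ℝ) < l⁻¹ ^ n := by positivity
      have hble : l⁻¹ ^ n ≤ 1 := pow_le_one₀ (by positivity) (inv_le_one_of_one_le₀ hl1.le)
      have h1 : l⁻¹ ^ (n+1) * s = (l⁻¹ ^ n * s) / l := by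
        rw [pow_succ, div_eq_mul_inv]
        ring
      rw [h1]
      have h2 := hstep (l⁻¹ ^ n * s) (by positivity) (by nlinarith)
      calc upperConj ω ((l⁻¹ ^ n * s)/l) ≤ c' * upperConj ω (l⁻¹^n * s) := h2
      _ ≤ c' * (c' ^ n * upperConj ω s) :=
          mul_le_mul_of_nonneg_left (ih s hs hsle) (by linarith)
      _ = c' ^ (n+1) * upperConj ω s := by ring
  have hcover : Set.Ioc (0:ℝ) 1 ⊆ ⋃ n : ℕ, Set.Ioc (l⁻¹ ^ (n+1)) (l⁻¹ ^ n) := by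
    intro u hu
    obtain ⟨hu0, hu1⟩ := hu
    have hb1 : l⁻¹ < 1 := inv_lt_one_of_one_lt₀ hl1
    have hex : ∃ m : ℕ, l⁻¹ ^ m < u := exists_pow_lt_of_lt_one hu0 hb1
    have hm := Nat.find_spec hex
    have hm0 : Nat.find hex ≠ 0 := by
      intro h
      rw [h, pow_zero] at hm
      exact absurd hm (not_lt.mpr hu1)
    obtain ⟨n, hn⟩ := Nat.exists_eq_succ_of_ne_zero hm0
    have hnlt : ¬ l⁻¹ ^ n < u := Nat.find_min hex (by omega)
    rw [hn] at hm
    exact Set.mem_iUnion.mpr ⟨n, hm, not_lt.mp hnlt⟩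
  set C₁ := c' * (1 - c'/l)⁻¹ with hC₁def
  have h1sub : (0:ℝ) < 1 - c'/l := by
    rw [sub_pos, div_lt_one hlpos]
    exact hc'l
  have hC₁pos : 0 < C₁ := by
    rw [hC₁def]
    have : (0:ℝ) < c' := lt_of_lt_of_le one_pos hc'1
    positivity
  have hcase1 : ∀ y : ℝ, 0 < y → y ≤ s₀ →
      (∫⁻ u in Set.Ioc (0:ℝ) 1, ENNReal.ofReal (upperConj ω (u * y))) ≤
        ENNReal.ofReal (C₁ * upperConj ω y) := by
    intro y hy hyle
    have hσy : 0 ≤ upperConj ω y := upperConj_nonneg hω h5 hy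
    have hc'pos : (0:ℝ) < c' := lt_of_lt_of_le one_pos hc'1
    calc (∫⁻ u in Set.Ioc (0:ℝ) 1, ENNReal.ofReal (upperConj ω (u * y)))
        ≤ ∫⁻ u in ⋃ n : ℕ, Set.Ioc (l⁻¹ ^ (n+1)) (l⁻¹ ^ n),
            ENNReal.ofReal (upperConj ω (u * y)) := lintegral_mono_set hcover
    _ ≤ ∑' n : ℕ, ∫⁻ u in Set.Ioc (l⁻¹ ^ (n+1)) (l⁻¹ ^ n),
            ENNReal.ofReal (upperConj ω (u * y)) := lintegral_iUnion_le _ _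
    _ ≤ ∑' n : ℕ, ENNReal.ofReal (c' * upperConj ω y) * ENNReal.ofReal (c'/l) ^ n := by
        refine ENNReal.tsum_le_tsum fun n => ?_
        have hstepn : ∀ u ∈ Set.Ioc (l⁻¹ ^ (n+1)) (l⁻¹ ^ n),
            ENNReal.ofReal (upperConj ω (u * y)) ≤
              ENNReal.ofReal (c' ^ (n+1) * upperConj ω y) := by
          intro u hu
          obtain ⟨hu1, hu2⟩ := hu
          have hb : (0:ℝ) < l⁻¹ ^ (n+1) := by positivity
          have h3 : upperConj ω (u * y) ≤ upperConj ω (l⁻¹ ^ (n+1) * y) := by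
            apply upperConj_antitone hω h5 (by positivity)
            nlinarith
          exact ENNReal.ofReal_le_ofReal (h3.trans (hiter (n+1) y hy hyle))
        calc ∫⁻ u in Set.Ioc (l⁻¹ ^ (n+1)) (l⁻¹ ^ n), ENNReal.ofReal (upperConj ω (u * y))
            ≤ ENNReal.ofReal (c' ^ (n+1) * upperConj ω y) *
                volume (Set.Ioc (l⁻¹ ^ (n+1)) (l⁻¹ ^ n)) :=
              setLIntegral_le_const' measurableSet_Ioc hstepn
        _ ≤ ENNReal.ofReal (c' ^ (n+1) * upperConj ω y) * ENNReal.ofReal (l⁻¹ ^ n) := by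
              rw [Real.volume_Ioc]
              refine mul_le_mul_right (ENNReal.ofReal_le_ofReal ?_) _
              have : (0:ℝ) < l⁻¹ ^ (n+1) := by positivity
              linarith
        _ = ENNReal.ofReal (c' * upperConj ω y) * ENNReal.ofReal (c'/l) ^ n := by
              rw [← ENNReal.ofReal_pow (by positivity), ← ENNReal.ofReal_mul (by positivity),
                ← ENNReal.ofReal_mul (by positivity)]
              congr 1
              rw [div_pow, inv_pow]
              field_simp
              ring
    _ = ENNReal.ofReal (c' * upperConj ω y) * (1 - ENNReal.ofReal (c'/l))⁻¹ := by
        rw [ENNReal.tsum_mul_left, ENNReal.tsum_geometric]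
    _ ≤ ENNReal.ofReal (C₁ * upperConj ω y) := by
        rw [← ENNReal.ofReal_one, ← ENNReal.ofReal_sub 1 (by positivity),
          ← ENNReal.ofReal_inv_of_pos h1sub, ← ENNReal.ofReal_mul (by positivity)]
        exact ENNReal.ofReal_le_ofReal (le_of_eq (by rw [hC₁def]; ring))
  refine ⟨max 1 (max C₁ (C₁ * upperConj ω s₀)), le_max_left _ _, ?_⟩
  intro y hy
  set C := max 1 (max C₁ (C₁ * upperConj ω s₀)) with hCdef
  have hC1 : (1:ℝ) ≤ C := le_max_left _ _
  have hCC₁ : C₁ ≤ C := (le_max_left _ _).trans (le_max_right _ _)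
  have hCσ₀ : C₁ * upperConj ω s₀ ≤ C := (le_max_right _ _).trans (le_max_right _ _)
  have hσy : 0 ≤ upperConj ω y := upperConj_nonneg hω h5 hy
  rcases le_or_gt y s₀ with hys | hys
  · calc (∫⁻ t in Set.Ioc (0:ℝ) 1, ENNReal.ofReal (upperConj ω (t * y)))
        ≤ ENNReal.ofReal (C₁ * upperConj ω y) := hcase1 y hy hys
    _ ≤ ENNReal.ofReal (C * (upperConj ω y + 1)) := by
        refine ENNReal.ofReal_le_ofReal ?_
        nlinarith [mul_le_mul_of_nonneg_right hCC₁ hσy]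
  · calc (∫⁻ t in Set.Ioc (0:ℝ) 1, ENNReal.ofReal (upperConj ω (t * y)))
        ≤ ∫⁻ u in Set.Ioc (0:ℝ) 1, ENNReal.ofReal (upperConj ω (u * s₀)) := by
          refine setLIntegral_mono_nomeas measurableSet_Ioc fun u hu => ?_
          obtain ⟨hu0, hu1⟩ := hu
          refine ENNReal.ofReal_le_ofReal (upperConj_antitone hω h5 (by positivity) ?_)
          nlinarith
    _ ≤ ENNReal.ofReal (C₁ * upperConj ω s₀) := hcase1 s₀ hs₀pos (le_refl _)
    _ ≤ ENNReal.ofReal (C * (upperConj ω y + 1)) := by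
        refine ENNReal.ofReal_le_ofReal ?_
        nlinarith [mul_nonneg (le_trans zero_le_one hC1) hσy]


variable {ω : ℝ → ℝ}

lemma backward (hω : IsWeightFunction ω) (h5 : Omega5 ω) {C : ℝ} (hC : 1 ≤ C)
    (hint : ∀ y : ℝ, 0 < y →
      (∫⁻ t in Set.Ioc (0:ℝ) 1, ENNReal.ofReal (upperConj ω (t * y))) ≤
        ENNReal.ofReal (C * (upperConj ω y + 1))) :
    ∃ γ : ℝ, 1 < γ ∧ Pcond (upperConjIota ω) γ := by
  obtain ⟨y₁, hy₁pos, hy₁⟩ := exists_ge_one hω h5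
  obtain ⟨g, hgm, hg⟩ := exists_measurable_version hω h5
  set S : ℝ → ENNReal := fun y => ∫⁻ v in Set.Ioc (0:ℝ) y, g v with hSdef
  have hScale : ∀ y : ℝ, 0 < y →
      (∫⁻ u in Set.Ioc (0:ℝ) 1, ENNReal.ofReal (upperConj ω (u * y))) =
        ENNReal.ofReal (1/y) * S y := by
    intro y hy
    rw [← lintegral_scale hgm hy]
    refine le_antisymm (setLIntegral_mono_nomeas measurableSet_Ioc fun u hu => ?_)
      (setLIntegral_mono_nomeas measurableSet_Ioc fun u hu => ?_)
    · obtain ⟨h1, h2⟩ := hu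
      rw [hg (u*y) (by positivity)]
    · obtain ⟨h1, h2⟩ := hu
      rw [hg (u*y) (by positivity)]
  have hSle : ∀ y : ℝ, 0 < y → S y ≤ ENNReal.ofReal (y * (C * (upperConj ω y + 1))) := by
    intro y hy
    have h1 := hint y hy
    rw [hScale y hy] at h1
    have h2 : S y = ENNReal.ofReal y * (ENNReal.ofReal (1/y) * S y) := by
      rw [← mul_assoc, ← ENNReal.ofReal_mul hy.le, mul_one_div, div_self (ne_of_gt hy),
        ENNReal.ofReal_one, one_mul]
    rw [h2, ENNReal.ofReal_mul hy.le]
    exact mul_le_mul_right h1 _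
  have hSfin : ∀ y : ℝ, 0 < y → S y ≠ ⊤ := fun y hy =>
    ne_top_of_le_ne_top ENNReal.ofReal_ne_top (hSle y hy)
  have hSsplit : ∀ y : ℝ, 0 < y → S y = S (y/2) + ∫⁻ v in Set.Ioc (y/2) y, g v := by
    intro y hy
    show (∫⁻ v in Set.Ioc (0:ℝ) y, g v) = _
    rw [← Set.Ioc_union_Ioc_eq_Ioc (by positivity : (0:ℝ) ≤ y/2) (by linarith : y/2 ≤ y),
      lintegral_union measurableSet_Ioc (Set.Ioc_disjoint_Ioc_of_le le_rfl)]
  have hlow : ∀ y : ℝ, 0 < y →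
      ENNReal.ofReal (upperConj ω y * (y/2)) ≤ ∫⁻ v in Set.Ioc (y/2) y, g v := by
    intro y hy
    have hc : ∀ v ∈ Set.Ioc (y/2) y, ENNReal.ofReal (upperConj ω y) ≤ g v := by
      intro v hv
      obtain ⟨hv1, hv2⟩ := hv
      have hvpos : 0 < v := lt_trans (by positivity) hv1
      rw [hg v hvpos]
      exact ENNReal.ofReal_le_ofReal (upperConj_antitone hω h5 hvpos hv2)
    calc ENNReal.ofReal (upperConj ω y * (y/2))
        = ENNReal.ofReal (upperConj ω y) * volume (Set.Ioc (y/2) y) := by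
          rw [Real.volume_Ioc, ← ENNReal.ofReal_mul (upperConj_nonneg hω h5 hy)]
          congr 1
          ring
    _ ≤ _ := const_le_setLIntegral measurableSet_Ioc hc
  set D := 2*C with hDdef
  have hD2 : 2 ≤ D := by linarith
  have hDpos : 0 < D := by linarith
  have haR : ∀ y : ℝ, 0 < y → y ≤ y₁ → (S y).toReal ≤ D * y * upperConj ω y := by
    intro y hy hyle
    have h1 := hSle y hy
    have hσ1 : 1 ≤ upperConj ω y := hy₁ y hy hyle
    have h2 : (S y).toReal ≤ y * (C * (upperConj ω y + 1)) :=
      ENNReal.toReal_le_of_le_ofReal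
        (mul_nonneg hy.le (mul_nonneg (by linarith) (by linarith))) h1
    have hA : C * (upperConj ω y + 1) ≤ 2*C*upperConj ω y := by
      nlinarith [mul_nonneg (by linarith : (0:ℝ) ≤ C) (by linarith : 0 ≤ upperConj ω y - 1)]
    have hB : y * (C * (upperConj ω y + 1)) ≤ y * (2*C*upperConj ω y) :=
      mul_le_mul_of_nonneg_left hA hy.le
    have hE : y * (2*C*upperConj ω y) = D * y * upperConj ω y := by rw [hDdef]; ring
    linarith
  have hmid : ∀ y : ℝ, 0 < y →
      upperConj ω y * (y/2) ≤ (S y).toReal - (S (y/2)).toReal := by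
    intro y hy
    have hsplit := hSsplit y hy
    have hIfin : (∫⁻ v in Set.Ioc (y/2) y, g v) ≠ ⊤ := by
      refine ne_top_of_le_ne_top (hSfin y hy) ?_
      rw [hsplit]
      exact le_add_self
    have h2fin : S (y/2) ≠ ⊤ := by
      refine ne_top_of_le_ne_top (hSfin y hy) ?_
      rw [hsplit]
      exact self_le_add_right _ _
    have htR : (S y).toReal = (S (y/2)).toReal + (∫⁻ v in Set.Ioc (y/2) y, g v).toReal := by
      rw [hsplit, ENNReal.toReal_add h2fin hIfin]
    have hlowR : upperConj ω y * (y/2) ≤ (∫⁻ v in Set.Ioc (y/2) y, g v).toReal :=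
      (ENNReal.ofReal_le_iff_le_toReal hIfin).mp (hlow y hy)
    linarith
  set ρ := 1 - 1/(2*D) with hρdef
  have hρlt : ρ < 1 := by
    rw [hρdef]
    have : 0 < 1/(2*D) := by positivity
    linarith
  have hρpos : 0 < ρ := by
    rw [hρdef]
    have h4 : (4:ℝ) ≤ 2*D := by linarith
    have : 1/(2*D) ≤ 1/4 := by
      apply one_div_le_one_div_of_le (by norm_num) h4
    linarith
  have hhalf : ∀ y : ℝ, 0 < y → y ≤ y₁ → (S (y/2)).toReal ≤ ρ * (S y).toReal := by
    intro y hy hyle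
    have h1 := hmid y hy
    have h2 := haR y hy hyle
    have hx : (S y).toReal * (1/(2*D)) ≤ upperConj ω y * (y/2) := by
      have h3 := mul_le_mul_of_nonneg_right h2 (le_of_lt (by positivity : (0:ℝ) < 1/(2*D)))
      calc (S y).toReal * (1/(2*D)) ≤ (D * y * upperConj ω y) * (1/(2*D)) := h3
      _ = upperConj ω y * (y/2) := by
          field_simp
    have h4 : (1 - 1/(2*D)) * (S y).toReal = (S y).toReal - (S y).toReal * (1/(2*D)) := by ring
    rw [hρdef, h4]
    linarith
  have hit : ∀ n : ℕ, ∀ y : ℝ, 0 < y → y ≤ y₁ →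
      (S (y/2^n)).toReal ≤ ρ^n * (S y).toReal := by
    intro n
    induction n with
    | zero =>
      intro y hy hyle
      simp
    | succ n ih =>
      intro y hy hyle
      have h2n : (0:ℝ) < 2^n := by positivity
      have hz : 0 < y/2^n := by positivity
      have hzle : y/2^n ≤ y₁ := by
        have h1 : y/2^n ≤ y := div_le_self hy.le (one_le_pow₀ (by norm_num))
        linarith
      have h1 := hhalf (y/2^n) hz hzle
      have h2 : y/2^(n+1) = (y/2^n)/2 := by rw [pow_succ, ← div_div]
      rw [h2]
      calc (S ((y/2^n)/2)).toReal ≤ ρ * (S (y/2^n)).toReal := h1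
      _ ≤ ρ * (ρ^n * (S y).toReal) := mul_le_mul_of_nonneg_left (ih y hy hyle) hρpos.le
      _ = ρ^(n+1) * (S y).toReal := by ring
  have hσb : ∀ n : ℕ, ∀ y : ℝ, 0 < y → y ≤ y₁ →
      upperConj ω (y/2^n) ≤ 2*D * (2*ρ)^n * upperConj ω y := by
    intro n y hy hyle
    have h2n : (0:ℝ) < 2^n := by positivity
    have hz : 0 < y/2^n := by positivity
    have h1 : upperConj ω (y/2^n) * ((y/2^n)/2) ≤ (S (y/2^n)).toReal := by
      have h0 := hmid (y/2^n) hz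
      have hnn : 0 ≤ (S ((y/2^n)/2)).toReal := ENNReal.toReal_nonneg
      linarith
    have h2 := hit n y hy hyle
    have h3 := haR y hy hyle
    have h4 : upperConj ω (y/2^n) * ((y/2^n)/2) ≤ ρ^n * (D * y * upperConj ω y) := by
      calc upperConj ω (y/2^n) * ((y/2^n)/2) ≤ (S (y/2^n)).toReal := h1
      _ ≤ ρ^n * (S y).toReal := h2
      _ ≤ ρ^n * (D * y * upperConj ω y) := mul_le_mul_of_nonneg_left h3 (by positivity)
    have h2n1 : (0:ℝ) < 2^(n+1) := by positivity
    have h5 : (y/2^n)/2 = y / 2^(n+1) := by rw [pow_succ, ← div_div]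
    rw [h5] at h4
    have h6 := mul_le_mul_of_nonneg_right h4 (le_of_lt (by positivity : (0:ℝ) < 2^(n+1)/y))
    calc upperConj ω (y/2^n)
        = upperConj ω (y/2^n) * (y/2^(n+1)) * (2^(n+1)/y) := by
          field_simp
    _ ≤ ρ^n * (D * y * upperConj ω y) * (2^(n+1)/y) := h6
    _ = 2*D * (2*ρ)^n * upperConj ω y := by
          rw [mul_pow, pow_succ]
          field_simp
  set θ := 2*ρ with hθdef
  have hθpos : 0 < θ := by rw [hθdef]; linarith
  have hθlt : θ < 2 := by rw [hθdef]; linarith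
  set μ := (θ+2)/2 with hμdef
  have hμθ : θ < μ := by rw [hμdef]; linarith
  have hμ1 : 1 < μ := by rw [hμdef]; linarith
  have hμ2 : μ < 2 := by rw [hμdef]; linarith
  have hμpos : 0 < μ := lt_trans one_pos hμ1
  have hlogμ : 0 < Real.log μ := Real.log_pos hμ1
  have hγ1 : 1 < Real.logb μ 2 := by
    rw [Real.logb, lt_div_iff₀ hlogμ, one_mul]
    exact Real.log_lt_log hμpos hμ2
  obtain ⟨n, hn⟩ := pow_unbounded_of_one_lt (2*D) ((one_lt_div hθpos).mpr hμθ)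
  have hn0 : n ≠ 0 := by
    intro h
    rw [h, pow_zero] at hn
    linarith
  have hμθn : 2*D*θ^n < μ^n := by
    rw [div_pow, lt_div_iff₀ (by positivity)] at hn
    nlinarith
  have hKγ : (μ ^ n : ℝ) ^ Real.logb μ 2 = (2:ℝ) ^ n := by
    rw [← Real.rpow_natCast μ n, ← Real.rpow_mul hμpos.le, mul_comm, Real.rpow_mul hμpos.le,
      Real.rpow_logb hμpos (ne_of_gt hμ1) two_pos, Real.rpow_natCast]
  refine ⟨Real.logb μ 2, hγ1, μ^n, one_lt_pow₀ hμ1 hn0, 2*D*θ^n, hμθn, ?_⟩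
  rw [Filter.eventually_atTop]
  refine ⟨max (1/y₁) 1, fun t ht => ?_⟩
  have ht1 : (1:ℝ) ≤ t := (le_max_right _ _).trans ht
  have htpos : 0 < t := lt_of_lt_of_le one_pos ht1
  have hyt : 0 < 1/t := by positivity
  have hytle : 1/t ≤ y₁ := by
    have h1 : 1/y₁ ≤ t := (le_max_left _ _).trans ht
    rw [div_le_iff₀ hy₁pos] at h1
    rw [div_le_iff₀ htpos]
    linarith
  have hτt : upperConjIota ω t = upperConj ω (1/t) := if_neg (ne_of_gt htpos)
  have hτ2 : upperConjIota ω ((μ^n:ℝ) ^ Real.logb μ 2 * t) = upperConj ω ((1/t)/2^n) := by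
    rw [hKγ, upperConjIota, if_neg (ne_of_gt (by positivity))]
    congr 1
    rw [div_div, mul_comm]
  have hσpos : (0:ℝ) < upperConj ω (1/t) := lt_of_lt_of_le one_pos (hy₁ _ hyt hytle)
  rw [hτt, hτ2, div_le_iff₀ hσpos]
  exact hσb n (1/t) hyt hytle


end GammaAux

/-- Lemma 2.1.1 analogue: characterization of
`γ((ω⋆)^ι) > 1` via an integral estimate for `ω⋆`. -/
theorem gamma_upperConjIota_gt_one_iff
    (ω : ℝ → ℝ) (hω : IsWeightFunction ω) (h5 : Omega5 ω) :
    1 < gammaIndex (upperConjIota ω) ↔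
      ∃ C : ℝ, 1 ≤ C ∧ ∀ y : ℝ, 0 < y →
        (∫⁻ t in Set.Ioc (0:ℝ) 1, ENNReal.ofReal (upperConj ω (t * y))) ≤
          ENNReal.ofReal (C * (upperConj ω y + 1)) := by
  constructor
  · intro h
    rw [gammaIndex] at h
    obtain ⟨γ, hγ⟩ := lt_iSup_iff.mp h
    obtain ⟨hγS, hγ1⟩ := lt_iSup_iff.mp hγ
    obtain ⟨hγpos, K, hK1, c, hcK, hev⟩ := hγS
    have hγgt : 1 < γ := by
      by_contra h'
      push_neg at h'
      have hle : ENNReal.ofReal γ ≤ 1 := by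
        rw [← ENNReal.ofReal_one]
        exact ENNReal.ofReal_le_ofReal h'
      exact absurd hγ1 (not_lt.mpr hle)
    exact GammaAux.forward hω h5 hγgt hK1 hcK hev
  · rintro ⟨C, hC1, hint⟩
    obtain ⟨γ, hγ1, hP⟩ := GammaAux.backward hω h5 hC1 hint
    calc (1:ENNReal) < ENNReal.ofReal γ := by
          rw [← ENNReal.ofReal_one]
          exact (ENNReal.ofReal_lt_ofReal_iff (lt_trans one_pos hγ1)).mpr hγ1
    _ ≤ gammaIndex (upperConjIota ω) :=
          le_iSup₂ (f := fun γ' (_ : γ' ∈ {γ' : ℝ | 0 < γ' ∧ Pcond (upperConjIota ω) γ'}) =>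
            ENNReal.ofReal γ') γ ⟨lt_trans one_pos hγ1, hP⟩
end

section
/- Let ω ∈ W_0 satisfy (ω_5), with associated weight matrix {W^l : l > 0} and w^l_j := W^l_j / j!. Then: (1) for all l > 0 and all s > 0, 2(ω_{W^{2l}})⋆(s) ≤ (ω_{W^l})⋆(2s); and (2) there exists A ≥ 1 such that for all l > 0 and all s > 0, h_{w^l}(s) ≤ (h_{w^{2l}}(As))². -/
open Filter MeasureTheory Set Asymptotics

section Aux

variable {ω : ℝ → ℝ}

lemma omega_nonneg (hω : InW0 ω) {t : ℝ} (ht : 0 ≤ t) : 0 ≤ ω t := by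
  have := hω.1.monotoneOn (Set.mem_Ici.mpr le_rfl) (Set.mem_Ici.mpr ht) ht
  rw [hω.1.map_zero] at this; exact this

lemma omega_one (hω : InW0 ω) : ω 1 = 0 := hω.2.1 1 ⟨zero_le_one, le_rfl⟩

lemma phiSet_bddAbove (hω : InW0 ω) (x : ℝ) :
    BddAbove ((fun y : ℝ => x * y - ω (Real.exp y)) '' Set.Ici 0) := by
  rcases le_or_gt x 0 with hx | hx
  · refine ⟨0, ?_⟩
    rintro _ ⟨y, hy, rfl⟩
    have h1 : 0 ≤ ω (Real.exp y) := omega_nonneg hω (Real.exp_pos y).le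
    have h2 : x * y ≤ 0 := mul_nonpos_of_nonpos_of_nonneg hx hy
    simp only
    linarith
  · have h3 := hω.2.2.1
    have hc : (0:ℝ) < 1/(2*x) := by positivity
    obtain ⟨Y, hY⟩ := Filter.eventually_atTop.mp (h3.def hc)
    set Y' := max Y 1 with hY'def
    refine ⟨x * Real.log Y', ?_⟩
    rintro _ ⟨y, hy, rfl⟩
    simp only
    have hY'1 : (1:ℝ) ≤ Y' := le_max_right _ _
    have hlogY' : 0 ≤ Real.log Y' := Real.log_nonneg hY'1
    rcases le_or_gt Y' (Real.exp y) with hcase | hcase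
    · have h4 := hY (Real.exp y) (le_trans (le_max_left _ _) hcase)
      rw [Real.norm_eq_abs, Real.norm_eq_abs, Real.log_exp,
        abs_of_nonneg hy, abs_of_nonneg (omega_nonneg hω (Real.exp_pos y).le)] at h4
      have h5 : 2 * x * y ≤ ω (Real.exp y) := by
        have h6 := mul_le_mul_of_nonneg_left h4 (by positivity : (0:ℝ) ≤ 2*x)
        have h7 : 2 * x * (1/(2*x) * ω (Real.exp y)) = ω (Real.exp y) := by
          field_simp
        linarith [h6, h7.le, h7.ge]
      nlinarith [mul_nonneg hx.le hy, mul_nonneg hx.le hlogY']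
    · have h6 : y ≤ Real.log Y' := by
        have := (Real.log_lt_log (Real.exp_pos y) hcase).le
        rwa [Real.log_exp] at this
      have h7 : x*y ≤ x * Real.log Y' := mul_le_mul_of_nonneg_left h6 hx.le
      have h8 : 0 ≤ ω (Real.exp y) := omega_nonneg hω (Real.exp_pos y).le
      linarith

lemma le_phiStar (hω : InW0 ω) (x : ℝ) {y : ℝ} (hy : 0 ≤ y) :
    x * y - ω (Real.exp y) ≤ phiStar ω x :=
  le_csSup (phiSet_bddAbove hω x) ⟨y, hy, rfl⟩

lemma phiStar_nonneg (hω : InW0 ω) (x : ℝ) : 0 ≤ phiStar ω x := by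
  have := le_phiStar hω x (le_refl (0:ℝ))
  rw [mul_zero, Real.exp_zero, omega_one hω] at this
  linarith

lemma phiStar_midpoint (hω : InW0 ω) (a b : ℝ) :
    phiStar ω ((a + b)/2) ≤ (phiStar ω a + phiStar ω b)/2 := by
  apply Real.sSup_le
  · rintro _ ⟨y, hy, rfl⟩
    have ha := le_phiStar hω a hy
    have hb := le_phiStar hω b hy
    simp only
    nlinarith
  · have h1 := phiStar_nonneg hω a
    have h2 := phiStar_nonneg hω b
    linarith

lemma Wseq_pos (ω : ℝ → ℝ) (l : ℝ) (j : ℕ) : 0 < Wseq ω l j := Real.exp_pos _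

lemma wseq_pos (ω : ℝ → ℝ) (l : ℝ) (j : ℕ) : 0 < wseq ω l j :=
  div_pos (Wseq_pos ω l j) (by exact_mod_cast j.factorial_pos)

lemma Wseq_key (hω : InW0 ω) {l : ℝ} (hl : 0 < l) (j k : ℕ) :
    Wseq ω l (j + k) ≤ Wseq ω (2*l) j * Wseq ω (2*l) k := by
  rw [Wseq, Wseq, Wseq, ← Real.exp_add, Real.exp_le_exp]
  have hmid := phiStar_midpoint hω (2*l*(j:ℝ)) (2*l*(k:ℝ))
  have harg : (2*l*(j:ℝ) + 2*l*(k:ℝ))/2 = l * (((j + k : ℕ)) : ℝ) := by push_cast; ring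
  rw [harg] at hmid
  have h1 : (0:ℝ) ≤ 1/l := by positivity
  have h2 := mul_le_mul_of_nonneg_left hmid h1
  calc 1/l * phiStar ω (l * (((j+k:ℕ)):ℝ))
      ≤ 1/l * ((phiStar ω (2*l*(j:ℝ)) + phiStar ω (2*l*(k:ℝ)))/2) := h2
    _ = 1/(2*l) * phiStar ω (2*l*(j:ℝ)) + 1/(2*l) * phiStar ω (2*l*(k:ℝ)) := by
        rw [one_div, one_div, mul_inv]; ring

lemma wseq_key (hω : InW0 ω) {l : ℝ} (hl : 0 < l) (k : ℕ) :
    wseq ω l (k + k) ≤ wseq ω (2*l) k * wseq ω (2*l) k := by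
  rw [wseq, wseq, div_mul_div_comm]
  have hfact : ((k.factorial * k.factorial : ℕ) : ℝ) ≤ (((k+k).factorial : ℕ) : ℝ) := by
    exact_mod_cast Nat.le_of_dvd (k+k).factorial_pos
      (Nat.factorial_mul_factorial_dvd_factorial_add k k)
  push_cast at hfact
  exact div_le_div₀ (mul_pos (Wseq_pos ω (2*l) k) (Wseq_pos ω (2*l) k)).le
    (Wseq_key hω hl k k)
    (mul_pos (by exact_mod_cast k.factorial_pos) (by exact_mod_cast k.factorial_pos)) hfact

lemma log_term_eq {t : ℝ} (ht : 0 < t) (ω : ℝ → ℝ) (l : ℝ) (p : ℕ) :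
    Real.log (t ^ p / Wseq ω l p) = (p:ℝ) * Real.log t - 1/l * phiStar ω (l * (p:ℝ)) := by
  rw [Real.log_div (pow_ne_zero _ ht.ne') (Wseq_pos ω l p).ne', Real.log_pow, Wseq,
    Real.log_exp]

lemma log_term_le (hω : InW0 ω) {l t : ℝ} (hl : 0 < l) (ht : 0 < t) (p : ℕ) :
    Real.log (t ^ p / Wseq ω l p) ≤ 1/l * ω (max t 1) := by
  rw [log_term_eq ht]
  have hps := phiStar_nonneg hω (l * (p:ℝ))
  rcases le_or_gt t 1 with h1 | h1
  · rw [max_eq_right h1, omega_one hω]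
    have hlog : Real.log t ≤ 0 := Real.log_nonpos ht.le h1
    have h2 : (p:ℝ) * Real.log t ≤ 0 :=
      mul_nonpos_of_nonneg_of_nonpos (Nat.cast_nonneg p) hlog
    have h3 : 0 ≤ 1/l * phiStar ω (l * (p:ℝ)) := mul_nonneg (by positivity) hps
    linarith
  · rw [max_eq_left h1.le]
    have hy : 0 ≤ Real.log t := Real.log_nonneg h1.le
    have h2 := le_phiStar hω (l * (p:ℝ)) hy
    rw [Real.exp_log ht] at h2
    have h3 := mul_le_mul_of_nonneg_left h2 (by positivity : (0:ℝ) ≤ 1/l)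
    rw [mul_sub] at h3
    have h4 : 1/l * (l * (p:ℝ) * Real.log t) = (p:ℝ) * Real.log t := by
      field_simp
    rw [h4] at h3
    linarith

lemma assocWeight_le (hω : InW0 ω) {l : ℝ} (hl : 0 < l) (t : ℝ) :
    assocWeight (Wseq ω l) t ≤ 1/l * ω (max t 1) := by
  rw [assocWeight]
  split_ifs with h
  · have hm : max t 1 = 1 := max_eq_right (le_trans h zero_le_one)
    rw [hm, omega_one hω, mul_zero]
  · exact ciSup_le (fun p => log_term_le hω hl (not_le.mp h) p)

lemma assoc_pointwise (hω : InW0 ω) {l : ℝ} (hl : 0 < l) (t : ℝ) :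
    2 * assocWeight (Wseq ω (2*l)) t ≤ assocWeight (Wseq ω l) t := by
  rw [assocWeight, assocWeight]
  split_ifs with h
  · norm_num
  · have ht : 0 < t := not_le.mp h
    have hbdd : BddAbove (Set.range fun p : ℕ => Real.log (t ^ p / Wseq ω l p)) := by
      refine ⟨1/l * ω (max t 1), ?_⟩
      rintro _ ⟨p, rfl⟩
      exact log_term_le hω hl ht p
    have key : ∀ p : ℕ, Real.log (t ^ p / Wseq ω (2*l) p)
        = Real.log (t ^ (2*p) / Wseq ω l (2*p)) / 2 := by
      intro p
      have hl0 : l ≠ 0 := hl.ne'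
      rw [log_term_eq ht, log_term_eq ht,
        show l * (((2*p : ℕ)):ℝ) = 2*l*(p:ℝ) by push_cast; ring]
      push_cast
      field_simp
    have hstep : (⨆ p : ℕ, Real.log (t ^ p / Wseq ω (2*l) p))
        ≤ (⨆ p : ℕ, Real.log (t ^ p / Wseq ω l p)) / 2 := by
      apply ciSup_le
      intro p
      rw [key p]
      have := le_ciSup hbdd (2*p)
      linarith
    linarith

lemma conjSet_bddAbove (hω : InW0 ω) (h5 : Omega5 ω) {l s : ℝ} (hl : 0 < l) (hs : 0 < s) :
    BddAbove ((fun t : ℝ => assocWeight (Wseq ω l) t - s * t) '' Set.Ici 0) := by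
  have hc : (0:ℝ) < s * l := by positivity
  obtain ⟨T0', hT0'⟩ := Filter.eventually_atTop.mp (h5.def hc)
  set T0 := max T0' 1 with hT0def
  refine ⟨1/l * ω T0, ?_⟩
  rintro _ ⟨t, ht, rfl⟩
  simp only
  have ht0 : (0:ℝ) ≤ t := ht
  have hT01 : (1:ℝ) ≤ T0 := le_max_right _ _
  have hωT0 : 0 ≤ ω T0 := omega_nonneg hω (by linarith)
  have haw := assocWeight_le hω hl t
  rcases le_or_gt t T0 with hcase | hcase
  · have hmax : max t 1 ≤ T0 := max_le hcase hT01
    have h2 : ω (max t 1) ≤ ω T0 :=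
      hω.1.monotoneOn (Set.mem_Ici.mpr (le_trans zero_le_one (le_max_right t 1)))
        (Set.mem_Ici.mpr (by linarith)) hmax
    have h3 : 1/l * ω (max t 1) ≤ 1/l * ω T0 :=
      mul_le_mul_of_nonneg_left h2 (by positivity)
    have h4 : 0 ≤ s * t := mul_nonneg hs.le ht0
    linarith
  · have hge : T0' ≤ t := le_trans (le_max_left _ _) hcase.le
    have h4 := hT0' t hge
    rw [Real.norm_eq_abs, Real.norm_eq_abs, abs_of_nonneg (omega_nonneg hω ht0),
      abs_of_nonneg ht0] at h4
    have hmax : max t 1 = t := max_eq_left (le_trans hT01 hcase.le)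
    rw [hmax] at haw
    have h5' : 1/l * ω t ≤ 1/l * (s*l*t) := mul_le_mul_of_nonneg_left h4 (by positivity)
    have h6 : 1/l * (s*l*t) = s*t := by field_simp
    have h7 : 0 ≤ 1/l * ω T0 := mul_nonneg (by positivity) hωT0
    linarith

end Aux

/-- Lemma on `h_{w^l}` and the conjugates of `ω_{W^l}`. -/
theorem conj_and_hFun_matrix_estimates
    (ω : ℝ → ℝ) (hω : InW0 ω) (h5 : Omega5 ω) :
    (∀ l : ℝ, 0 < l → ∀ s : ℝ, 0 < s →
      2 * upperConj (assocWeight (Wseq ω (2 * l))) s ≤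
        upperConj (assocWeight (Wseq ω l)) (2 * s)) ∧
    (∃ A : ℝ, 1 ≤ A ∧ ∀ l : ℝ, 0 < l → ∀ s : ℝ, 0 < s →
      hFun (wseq ω l) s ≤ (hFun (wseq ω (2 * l)) (A * s)) ^ 2) := by
  constructor
  · -- Part (1)
    intro l hl s hs
    have h2s : (0:ℝ) < 2*s := by positivity
    rw [upperConj, upperConj]
    have hT := conjSet_bddAbove hω h5 hl h2s
    have h0T : (0:ℝ) ∈ ((fun t : ℝ => assocWeight (Wseq ω l) t - 2*s*t) '' Set.Ici 0) := by
      refine ⟨0, Set.self_mem_Ici, ?_⟩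
      simp [assocWeight]
    have hTnn : (0:ℝ) ≤ sSup ((fun t : ℝ => assocWeight (Wseq ω l) t - 2*s*t) '' Set.Ici 0) :=
      le_csSup hT h0T
    have hmain : sSup ((fun t : ℝ => assocWeight (Wseq ω (2*l)) t - s*t) '' Set.Ici 0)
        ≤ sSup ((fun t : ℝ => assocWeight (Wseq ω l) t - 2*s*t) '' Set.Ici 0) / 2 := by
      apply Real.sSup_le
      · rintro _ ⟨t, htset, rfl⟩
        have hp := assoc_pointwise hω hl t
        have hmem : assocWeight (Wseq ω l) t - 2*s*t
            ∈ ((fun t : ℝ => assocWeight (Wseq ω l) t - 2*s*t) '' Set.Ici 0) :=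
          ⟨t, htset, rfl⟩
        have hle := le_csSup hT hmem
        simp only
        linarith
      · linarith
    linarith
  · -- Part (2)
    refine ⟨1, le_rfl, ?_⟩
    intro l hl s hs
    simp only [one_mul, hFun]
    have hb0 : ∀ k : ℕ, 0 ≤ wseq ω (2*l) k * s ^ k :=
      fun k => le_of_lt (mul_pos (wseq_pos ω (2*l) k) (pow_pos hs k))
    have hI0 : (0:ℝ) ≤ ⨅ k : ℕ, wseq ω (2*l) k * s ^ k := le_ciInf hb0
    apply le_of_forall_pos_le_add
    intro δ hδ
    have hsq : (0:ℝ) ≤ (⨅ k : ℕ, wseq ω (2*l) k * s ^ k)^2 + δ := by nlinarith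
    have hlt : (⨅ k : ℕ, wseq ω (2*l) k * s ^ k)
        < Real.sqrt ((⨅ k : ℕ, wseq ω (2*l) k * s ^ k)^2 + δ) :=
      (Real.lt_sqrt hI0).mpr (by linarith)
    obtain ⟨k, hk⟩ := exists_lt_of_ciInf_lt hlt
    have hbddl : BddBelow (Set.range fun k : ℕ => wseq ω l k * s ^ k) :=
      ⟨0, by rintro _ ⟨k, rfl⟩; exact le_of_lt (mul_pos (wseq_pos ω l k) (pow_pos hs k))⟩
    have h1 : (⨅ k : ℕ, wseq ω l k * s ^ k) ≤ wseq ω l (k + k) * s ^ (k + k) :=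
      ciInf_le hbddl (k+k)
    have h2 : wseq ω l (k + k) * s ^ (k + k) ≤ (wseq ω (2*l) k * s ^ k) ^ 2 := by
      have hkey := wseq_key hω hl k
      have hs2 : (0:ℝ) ≤ s ^ (k+k) := (pow_pos hs _).le
      have hmul := mul_le_mul_of_nonneg_right hkey hs2
      calc wseq ω l (k+k) * s^(k+k)
          ≤ wseq ω (2*l) k * wseq ω (2*l) k * s^(k+k) := hmul
        _ = (wseq ω (2*l) k * s ^ k) ^ 2 := by rw [pow_add]; ring
    have h3 : (wseq ω (2*l) k * s ^ k) ^ 2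
        < (⨅ k : ℕ, wseq ω (2*l) k * s ^ k)^2 + δ := by
      have hp := pow_lt_pow_left₀ hk (hb0 k) two_ne_zero
      rwa [Real.sq_sqrt hsq] at hp
    linarith
end

section
/- Let M = (M_p)_{p∈ℕ} be a sequence of positive reals with M_0 = 1 such that (m_p)^{1/p} → ∞, where m_p := M_p/p!. Then for all s > 0: (ω_M)⋆(s) ≤ ω_m(1/s) ≤ (ω_M)⋆(s/e); equivalently, ((ω_M)⋆)^ι(s) ≤ ω_m(s) ≤ ((ω_M)⋆)^ι(se) for all s > 0. -/
open Filter MeasureTheory Set Asymptotics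

section Aux

lemma bddAbove_range_of_eventually {f : ℕ → ℝ} {N : ℕ} {c : ℝ}
    (h : ∀ n, N ≤ n → f n ≤ c) : BddAbove (Set.range f) := by
  obtain ⟨B, hB⟩ := ((Set.finite_Iio N).image f).bddAbove
  refine ⟨max B c, ?_⟩
  rintro _ ⟨n, rfl⟩
  rcases lt_or_ge n N with h' | h'
  · exact le_max_of_le_left (hB ⟨n, h', rfl⟩)
  · exact le_max_of_le_right (h n h')

variable {M : ℕ → ℝ} (hpos : ∀ p, 0 < M p) (hM0 : M 0 = 1)
  (hm : Filter.Tendsto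
      (fun p : ℕ => (M p / (Nat.factorial p : ℝ)) ^ ((1 : ℝ) / (p : ℝ)))
      Filter.atTop Filter.atTop)

include hpos in
lemma mpos (p : ℕ) : 0 < M p / (Nat.factorial p : ℝ) := by
  have h1 := hpos p
  have h2 : (0:ℝ) < (Nat.factorial p : ℝ) := by exact_mod_cast Nat.factorial_pos p
  positivity

include hpos hm in
lemma event_le (t : ℝ) (ht : 0 < t) :
    ∃ N, ∀ p, N ≤ p → Real.log (t ^ p / (M p / (Nat.factorial p : ℝ))) ≤ 0 := by
  obtain ⟨N, hN⟩ := (hm.eventually_ge_atTop (t + 1)).exists_forall_of_atTop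
  refine ⟨max N 1, fun p hp => ?_⟩
  have hp1 : 1 ≤ p := le_trans (le_max_right _ _) hp
  have hpN : N ≤ p := le_trans (le_max_left _ _) hp
  have hmp := mpos hpos p
  have h1 : t + 1 ≤ (M p / (Nat.factorial p : ℝ)) ^ ((1:ℝ) / (p:ℝ)) := hN p hpN
  have hpe : ((p:ℝ)) ≠ 0 := by exact_mod_cast Nat.one_le_iff_ne_zero.mp hp1
  have h2 : (t + 1) ^ p ≤ M p / (Nat.factorial p : ℝ) := by
    calc (t + 1) ^ p ≤ ((M p / (Nat.factorial p : ℝ)) ^ ((1:ℝ) / (p:ℝ))) ^ p :=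
          pow_le_pow_left₀ (by linarith) h1 p
      _ = M p / (Nat.factorial p : ℝ) := by
          rw [← Real.rpow_natCast ((M p / (Nat.factorial p : ℝ)) ^ ((1:ℝ)/(p:ℝ))) p,
            ← Real.rpow_mul hmp.le, one_div, inv_mul_cancel₀ hpe, Real.rpow_one]
  have h3 : t ^ p ≤ M p / (Nat.factorial p : ℝ) :=
    le_trans (pow_le_pow_left₀ ht.le (by linarith) p) h2
  exact Real.log_nonpos (by positivity) ((div_le_one hmp).mpr h3)

include hpos hm in
lemma bddm (t : ℝ) (ht : 0 < t) :
    BddAbove (Set.range fun p : ℕ => Real.log (t ^ p / (M p / (Nat.factorial p : ℝ)))) := by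
  obtain ⟨N, hN⟩ := event_le hpos hm t ht
  exact bddAbove_range_of_eventually hN

include hpos hm in
lemma bddM (t : ℝ) (ht : 0 < t) :
    BddAbove (Set.range fun p : ℕ => Real.log (t ^ p / M p)) := by
  obtain ⟨B, hB⟩ := bddm hpos hm t ht
  refine ⟨B, ?_⟩
  rintro _ ⟨p, rfl⟩
  have h1 : t ^ p / M p ≤ t ^ p / (M p / (Nat.factorial p : ℝ)) := by
    have hf : (1:ℝ) ≤ (Nat.factorial p : ℝ) := by exact_mod_cast (Nat.factorial_pos p)
    gcongr
    · exact mpos hpos p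
    · exact div_le_self (hpos p).le hf
  have hMp := hpos p
  calc Real.log (t ^ p / M p) ≤ Real.log (t ^ p / (M p / (Nat.factorial p : ℝ))) :=
        Real.log_le_log (by positivity) h1
    _ ≤ B := hB ⟨p, rfl⟩

end Aux

section Key
variable {M : ℕ → ℝ} (hpos : ∀ p, 0 < M p) (hM0 : M 0 = 1)
  (hm : Filter.Tendsto
      (fun p : ℕ => (M p / (Nat.factorial p : ℝ)) ^ ((1 : ℝ) / (p : ℝ)))
      Filter.atTop Filter.atTop)

include hpos in
lemma keyA (s t : ℝ) (hs : 0 < s) (ht : 0 < t) (p : ℕ) :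
    Real.log (t ^ p / M p) - s * t ≤
      Real.log ((1 / s) ^ p / (M p / (Nat.factorial p : ℝ))) := by
  have hMp := hpos p
  have hfac : (0:ℝ) < (Nat.factorial p : ℝ) := by exact_mod_cast Nat.factorial_pos p
  have h1 : (s * t) ^ p ≤ (Nat.factorial p : ℝ) * Real.exp (s * t) := by
    have := Real.pow_div_factorial_le_exp (x := s * t) (by positivity) p
    rw [div_le_iff₀ hfac] at this
    linarith [this]
  have h2 : t ^ p / M p ≤ (1 / s) ^ p / (M p / (Nat.factorial p : ℝ)) * Real.exp (s * t) := by
    have heq : (1 / s) ^ p / (M p / (Nat.factorial p : ℝ)) * Real.exp (s * t)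
        = ((Nat.factorial p : ℝ) * Real.exp (s * t)) / (s ^ p * M p) := by
      field_simp
      rw [← mul_pow, one_div, inv_mul_cancel₀ hs.ne', one_pow]
    rw [heq, div_le_div_iff₀ hMp (by positivity)]
    calc t ^ p * (s ^ p * M p) = (s * t) ^ p * M p := by rw [mul_pow]; ring
      _ ≤ (Nat.factorial p : ℝ) * Real.exp (s * t) * M p :=
          mul_le_mul_of_nonneg_right h1 hMp.le
  have h3 : Real.log (t ^ p / M p) ≤
      Real.log ((1 / s) ^ p / (M p / (Nat.factorial p : ℝ))) + s * t := by
    calc Real.log (t ^ p / M p)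
        ≤ Real.log ((1 / s) ^ p / (M p / (Nat.factorial p : ℝ)) * Real.exp (s * t)) :=
          Real.log_le_log (by positivity) h2
      _ = _ := by
          rw [Real.log_mul (by positivity) (Real.exp_ne_zero _), Real.log_exp]
  linarith

include hpos in
lemma keyB (s : ℝ) (hs : 0 < s) (p : ℕ) (hp : 1 ≤ p) :
    Real.log ((1 / s) ^ p / (M p / (Nat.factorial p : ℝ))) + (p : ℝ) ≤
      Real.log ((Real.exp 1 * p / s) ^ p / M p) := by
  have hMp := hpos p
  have hfac : (0:ℝ) < (Nat.factorial p : ℝ) := by exact_mod_cast Nat.factorial_pos p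
  have hppos : (0:ℝ) < (p : ℝ) := by exact_mod_cast hp
  have he : (0:ℝ) < Real.exp 1 := Real.exp_pos 1
  have hfactle : ((Nat.factorial p : ℝ)) ≤ (p : ℝ) ^ p := by
    exact_mod_cast Nat.factorial_le_pow p
  have hA : (0:ℝ) < (1 / s) ^ p / (M p / (Nat.factorial p : ℝ)) := by positivity
  have h2 : (1 / s) ^ p / (M p / (Nat.factorial p : ℝ)) * Real.exp 1 ^ p ≤
      (Real.exp 1 * p / s) ^ p / M p := by
    have heq : (Real.exp 1 * p / s) ^ p / M p =
        ((1 / s) ^ p / (M p / (Nat.factorial p : ℝ)) * Real.exp 1 ^ p) *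
          ((p : ℝ) ^ p / (Nat.factorial p : ℝ)) := by
      field_simp
      rw [div_pow, mul_pow, Real.exp_one_pow]
      ring
    rw [heq]
    exact le_mul_of_one_le_right (by positivity) ((one_le_div hfac).mpr hfactle)
  calc Real.log ((1 / s) ^ p / (M p / (Nat.factorial p : ℝ))) + (p : ℝ)
      = Real.log ((1 / s) ^ p / (M p / (Nat.factorial p : ℝ)) * Real.exp 1 ^ p) := by
        rw [Real.log_mul (ne_of_gt hA) (by positivity), Real.log_pow, Real.log_exp]
        ring
    _ ≤ Real.log ((Real.exp 1 * p / s) ^ p / M p) := Real.log_le_log (by positivity) h2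

end Key

section Claims
variable {M : ℕ → ℝ} (hpos : ∀ p, 0 < M p) (hM0 : M 0 = 1)
  (hm : Filter.Tendsto
      (fun p : ℕ => (M p / (Nat.factorial p : ℝ)) ^ ((1 : ℝ) / (p : ℝ)))
      Filter.atTop Filter.atTop)

lemma assoc_pos_eq (P : ℕ → ℝ) (t : ℝ) (ht : 0 < t) :
    assocWeight P t = ⨆ p : ℕ, Real.log (t ^ p / P p) := if_neg (not_le.mpr ht)

include hpos hM0 hm in
lemma assocm_nonneg (t : ℝ) (ht : 0 < t) :
    0 ≤ assocWeight (fun p => M p / (Nat.factorial p : ℝ)) t := by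
  rw [assoc_pos_eq _ t ht]
  have h0 : Real.log (t ^ 0 / (M 0 / (Nat.factorial 0 : ℝ))) = 0 := by
    simp [hM0]
  calc (0:ℝ) = Real.log (t ^ 0 / (M 0 / (Nat.factorial 0 : ℝ))) := h0.symm
    _ ≤ ⨆ p : ℕ, Real.log (t ^ p / (M p / (Nat.factorial p : ℝ))) :=
      le_ciSup (bddm hpos hm t ht) 0

include hpos hM0 hm in
lemma elem_bound (s t : ℝ) (hs : 0 < s) (ht : 0 ≤ t) :
    assocWeight M t - s * t ≤ assocWeight (fun p => M p / (Nat.factorial p : ℝ)) (1 / s) := by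
  have h1s : 0 < 1 / s := by positivity
  rcases eq_or_lt_of_le ht with rfl | htp
  · have : assocWeight M 0 = 0 := if_pos le_rfl
    rw [this]
    have := assocm_nonneg hpos hM0 hm (1 / s) h1s
    linarith
  · rw [assoc_pos_eq M t htp, assoc_pos_eq _ (1 / s) h1s]
    have key : ∀ p : ℕ, Real.log (t ^ p / M p) ≤
        (⨆ q : ℕ, Real.log ((1 / s) ^ q / (M q / (Nat.factorial q : ℝ)))) + s * t := by
      intro p
      have h1 := keyA hpos s t hs htp p
      have h2 := le_ciSup (bddm hpos hm (1 / s) h1s) p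
      linarith
    have := ciSup_le key
    linarith

include hpos hM0 hm in
lemma claim1 (s : ℝ) (hs : 0 < s) :
    upperConj (assocWeight M) s ≤
      assocWeight (fun p => M p / (Nat.factorial p : ℝ)) (1 / s) := by
  apply Real.sSup_le
  · rintro x ⟨t, ht, rfl⟩
    exact elem_bound hpos hM0 hm s t hs ht
  · exact assocm_nonneg hpos hM0 hm (1 / s) (by positivity)

include hpos hM0 hm in
lemma claim2 (s : ℝ) (hs : 0 < s) :
    assocWeight (fun p => M p / (Nat.factorial p : ℝ)) (1 / s) ≤
      upperConj (assocWeight M) (s / Real.exp 1) := by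
  have h1s : 0 < 1 / s := by positivity
  have hsd : 0 < s / Real.exp 1 := by positivity
  have hBdd : BddAbove ((fun t : ℝ => assocWeight M t - (s / Real.exp 1) * t) '' Set.Ici 0) := by
    refine ⟨assocWeight (fun p => M p / (Nat.factorial p : ℝ)) (1 / (s / Real.exp 1)), ?_⟩
    rintro _ ⟨t, ht, rfl⟩
    exact elem_bound hpos hM0 hm _ t hsd ht
  rw [assoc_pos_eq _ (1 / s) h1s]
  apply ciSup_le
  intro p
  rcases Nat.eq_zero_or_pos p with rfl | hp
  · have h0 : Real.log ((1 / s) ^ 0 / (M 0 / (Nat.factorial 0 : ℝ))) = 0 := by simp [hM0]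
    rw [h0, upperConj]
    refine le_csSup hBdd ⟨0, self_mem_Ici, ?_⟩
    simp [assocWeight]
  · set t := Real.exp 1 * p / s with htdef
    have hppos : (0:ℝ) < (p : ℝ) := by exact_mod_cast hp
    have ht : 0 < t := by positivity
    have hB := keyB hpos s hs p hp
    rw [← htdef] at hB
    have h2 : Real.log (t ^ p / M p) ≤ assocWeight M t := by
      rw [assoc_pos_eq M t ht]
      exact le_ciSup (bddM hpos hm t ht) p
    have h3 : (s / Real.exp 1) * t = (p : ℝ) := by
      rw [htdef]
      field_simp
    have h5 := le_csSup hBdd ⟨t, ht.le, rfl⟩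
    rw [upperConj]
    simp only at h5 ⊢
    linarith

end Claims

/-- Lemma 3.1 analogue: relation between `(ω_M)⋆` and `ω_m`,
`m_p = M_p/p!`. -/
theorem upperConj_assocWeight_estimates
    (M : ℕ → ℝ) (hpos : ∀ p, 0 < M p) (hM0 : M 0 = 1)
    (hm : Filter.Tendsto
      (fun p : ℕ => (M p / (Nat.factorial p : ℝ)) ^ ((1 : ℝ) / (p : ℝ)))
      Filter.atTop Filter.atTop) :
    ∀ s : ℝ, 0 < s →
      (upperConj (assocWeight M) s ≤
          assocWeight (fun p => M p / (Nat.factorial p : ℝ)) (1 / s) ∧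
        assocWeight (fun p => M p / (Nat.factorial p : ℝ)) (1 / s) ≤
          upperConj (assocWeight M) (s / Real.exp 1)) ∧
      (upperConjIota (assocWeight M) s ≤
          assocWeight (fun p => M p / (Nat.factorial p : ℝ)) s ∧
        assocWeight (fun p => M p / (Nat.factorial p : ℝ)) s ≤
          upperConjIota (assocWeight M) (s * Real.exp 1)) := by
  intro s hs
  have hs' : 0 < 1 / s := by positivity
  refine ⟨⟨claim1 hpos hM0 hm s hs, claim2 hpos hM0 hm s hs⟩, ?_, ?_⟩
  · have h := claim1 hpos hM0 hm (1 / s) hs'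
    rw [one_div_one_div] at h
    rw [upperConjIota, if_neg hs.ne']
    exact h
  · have h := claim2 hpos hM0 hm (1 / s) hs'
    rw [one_div_one_div] at h
    rw [upperConjIota, if_neg (mul_pos hs (Real.exp_pos 1)).ne']
    rw [show 1 / (s * Real.exp 1) = (1 / s) / Real.exp 1 from (div_div 1 s (Real.exp 1)).symm]
    exact h
end

section
/- Let M, N ∈ LC. Then the mixed moderate growth condition (M,N)_(mg) — there exists C ≥ 1 with M_{j+k} ≤ C^{j+k} N_j N_k for all j, k ∈ ℕ — holds if and only if there exists A ≥ 1 such that 2ω_N(t) ≤ ω_M(At) for all t ≥ 0, equivalently if and only if there exists A ≥ 1 with h_M(t) ≤ (h_N(At))² for all t > 0. -/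
open Filter MeasureTheory Set Asymptotics

private lemma LC_ratio_mono {M : ℕ → ℝ} (hM : LCseq M) :
    Monotone (fun q => M (q+1) / M q) := by
  apply monotone_nat_of_le_succ
  intro q
  have h1 := hM.2.2.2.1 (q+1) (by omega)
  simp only [Nat.add_sub_cancel] at h1
  have hq := hM.1 q; have hq1 := hM.1 (q+1); have hq2 := hM.1 (q+2)
  rw [div_le_div_iff₀ hq hq1]
  nlinarith [h1]

private lemma LC_pow_le {M : ℕ → ℝ} (hM : LCseq M) (p d : ℕ) :
    M p * (M (p+1) / M p) ^ d ≤ M (p+d) := by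
  induction d with
  | zero => simp
  | succ d ih =>
    have hr : M (p+1)/M p ≤ M (p+d+1)/M (p+d) := LC_ratio_mono hM (by omega : p ≤ p + d)
    have hpd := hM.1 (p+d)
    have hrpos : 0 < M (p+1)/M p := div_pos (hM.1 _) (hM.1 _)
    calc M p * (M (p+1)/M p)^(d+1) = (M p * (M (p+1)/M p)^d) * (M (p+1)/M p) := by ring
    _ ≤ M (p+d) * (M (p+d+1)/M (p+d)) :=
        mul_le_mul ih hr (le_of_lt hrpos) (le_of_lt hpd)
    _ = M (p+d+1) := by field_simp

private lemma LC_le_pow {M : ℕ → ℝ} (hM : LCseq M) (q d : ℕ) :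
    M (q+d) ≤ M q * (M (q+d+1) / M (q+d)) ^ d := by
  induction d with
  | zero => simp
  | succ d ih =>
    have hr : M (q+d+1)/M (q+d) ≤ M (q+d+2)/M (q+d+1) :=
      LC_ratio_mono hM (by omega : q+d ≤ q+d+1)
    have hr1pos : (0:ℝ) < M (q+d+1)/M (q+d) := div_pos (hM.1 _) (hM.1 _)
    have heq : M (q+d+1) = M (q+d) * (M (q+d+1)/M (q+d)) := by
      rw [mul_comm, div_mul_cancel₀ _ (hM.1 (q+d)).ne']
    calc M (q+(d+1)) = M (q+d) * (M (q+d+1)/M (q+d)) := heq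
    _ ≤ (M q * (M (q+d+1)/M (q+d))^d) * (M (q+d+1)/M (q+d)) :=
        mul_le_mul_of_nonneg_right ih (le_of_lt hr1pos)
    _ = M q * (M (q+d+1)/M (q+d))^(d+1) := by ring
    _ ≤ M q * (M (q+d+2)/M (q+d+1))^(d+1) :=
        mul_le_mul_of_nonneg_left (pow_le_pow_left₀ (le_of_lt hr1pos) hr _) (le_of_lt (hM.1 q))

private lemma LC_key {M : ℕ → ℝ} (hM : LCseq M) (p q : ℕ) :
    M p * (M (p+1)/M p) ^ q ≤ M q * (M (p+1)/M p) ^ p := by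
  have hrpos : 0 < M (p+1)/M p := div_pos (hM.1 _) (hM.1 _)
  rcases le_or_gt p q with h | h
  · obtain ⟨d, rfl⟩ : ∃ d, q = p + d := ⟨q - p, by omega⟩
    have h1 := LC_pow_le hM p d
    calc M p * (M (p+1)/M p)^(p+d) = (M p * (M (p+1)/M p)^d) * (M (p+1)/M p)^p := by ring
    _ ≤ M (p+d) * (M (p+1)/M p)^p := mul_le_mul_of_nonneg_right h1 (by positivity)
  · obtain ⟨d, rfl⟩ : ∃ d, p = q + d := ⟨p - q, by omega⟩
    have h1 := LC_le_pow hM q d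
    calc M (q+d) * (M (q+d+1)/M (q+d))^q
        ≤ (M q * (M (q+d+1)/M (q+d))^d) * (M (q+d+1)/M (q+d))^q :=
        mul_le_mul_of_nonneg_right h1 (by positivity)
    _ = M q * (M (q+d+1)/M (q+d))^(q+d) := by ring

private lemma LC_bddAbove {M : ℕ → ℝ} (hM : LCseq M) {t : ℝ} (ht : 0 < t) :
    BddAbove (Set.range fun p : ℕ => Real.log (t ^ p / M p)) := by
  obtain ⟨P, hP⟩ := Filter.eventually_atTop.1 (hM.2.2.2.2.eventually_ge_atTop (2*t))
  set f : ℕ → ℝ := fun p => Real.log (t ^ p / M p) with hf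
  refine ⟨max ((Finset.range (P+1)).sup' (by simp) f) 0, ?_⟩
  rintro x ⟨p, rfl⟩
  rcases le_or_gt p P with h | h
  · exact le_max_of_le_left (Finset.le_sup' f (Finset.mem_range.2 (by omega)))
  · refine le_max_of_le_right ?_
    have h2t : 2*t ≤ M p ^ ((1:ℝ)/(p:ℝ)) := hP p (by omega)
    have hpne : ((p:ℝ)) ≠ 0 := by
      exact Nat.cast_ne_zero.2 (by omega)
    have hMp : (2*t)^p ≤ M p := by
      have h0 := Real.rpow_le_rpow (by positivity) h2t (by positivity : (0:ℝ) ≤ (p:ℝ))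
      rw [← Real.rpow_natCast (2*t) p]
      calc (2*t)^(p:ℝ) ≤ (M p ^ ((1:ℝ)/(p:ℝ)))^((p:ℕ):ℝ) := h0
      _ = M p := by
          rw [← Real.rpow_mul (le_of_lt (hM.1 p)), one_div, inv_mul_cancel₀ hpne, Real.rpow_one]
    have htp : t^p ≤ M p := le_trans (pow_le_pow_left₀ ht.le (by linarith) p) hMp
    exact Real.log_nonpos (div_nonneg (by positivity) (hM.1 p).le) ((div_le_one (hM.1 p)).2 htp)

private lemma assocWeight_pos_eq (M : ℕ → ℝ) {t : ℝ} (ht : 0 < t) :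
    assocWeight M t = ⨆ p : ℕ, Real.log (t ^ p / M p) := by
  rw [assocWeight, if_neg (not_le.2 ht)]

private lemma key_inv {M : ℕ → ℝ} (hM : LCseq M) (p q : ℕ) :
    M p * (M p / M (p+1)) ^ p ≤ M q * (M p / M (p+1)) ^ q := by
  have hkey := LC_key hM p q
  have h1 := hM.1 p; have h2 := hM.1 (p+1); have hq := hM.1 q
  have hμ : (0:ℝ) < M (p+1)/M p := div_pos h2 h1
  have hinv : M p / M (p+1) = (M (p+1)/M p)⁻¹ := by
    rw [inv_div]
  rw [hinv, inv_pow, inv_pow, ← one_div, ← one_div, mul_one_div, mul_one_div,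
    div_le_div_iff₀ (pow_pos hμ p) (pow_pos hμ q)]
  exact hkey

private lemma key_div {M : ℕ → ℝ} (hM : LCseq M) (p q : ℕ) :
    (M (p+1)/M p)^q / M q ≤ (M (p+1)/M p)^p / M p := by
  rw [div_le_div_iff₀ (hM.1 q) (hM.1 p)]
  nlinarith [LC_key hM p q]

private lemma aux_mg_to_omega (M N : ℕ → ℝ) (hM : LCseq M) (hN : LCseq N) :
    (∃ C : ℝ, 1 ≤ C ∧ ∀ j k : ℕ, M (j + k) ≤ C ^ (j + k) * N j * N k) →
      (∃ A : ℝ, 1 ≤ A ∧ ∀ t : ℝ, 0 ≤ t →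
        2 * assocWeight N t ≤ assocWeight M (A * t)) := by
  rintro ⟨C, hC, hmg⟩
  refine ⟨C, hC, fun t ht => ?_⟩
  rcases eq_or_lt_of_le ht with rfl | ht'
  · simp [assocWeight]
  · have hC0 : (0:ℝ) < C := lt_of_lt_of_le one_pos hC
    have hCt : 0 < C * t := by positivity
    rw [assocWeight_pos_eq N ht', assocWeight_pos_eq M hCt]
    set f : ℕ → ℝ := fun j => Real.log (t^j / N j) with hfdef
    set W := ⨆ p : ℕ, Real.log ((C*t)^p / M p) with hW
    have hfk : ∀ j k, f j + f k ≤ W := by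
      intro j k
      have h1 : Real.log ((C*t)^(j+k) / M (j+k)) ≤ W := le_ciSup (LC_bddAbove hM hCt) (j+k)
      have hNj := hN.1 j; have hNk := hN.1 k
      have hMjk := hM.1 (j+k)
      have h2 : t^(j+k) / (N j * N k) ≤ (C*t)^(j+k) / M (j+k) := by
        rw [div_le_div_iff₀ (by positivity) hMjk]
        calc t^(j+k) * M (j+k) ≤ t^(j+k) * (C^(j+k) * N j * N k) :=
          mul_le_mul_of_nonneg_left (hmg j k) (by positivity)
        _ = (C*t)^(j+k) * (N j * N k) := by rw [mul_pow]; ring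
      have h3 : Real.log (t^(j+k)/(N j * N k)) ≤ Real.log ((C*t)^(j+k)/M (j+k)) :=
        Real.log_le_log (by positivity) h2
      have h4 : Real.log (t^(j+k)/(N j * N k)) = f j + f k := by
        rw [hfdef]
        simp only []
        rw [← Real.log_mul (by positivity) (by positivity)]
        congr 1
        rw [pow_add]
        field_simp
      linarith
    have h1 : (⨆ j, f j) ≤ W - (⨆ j, f j) := by
      apply ciSup_le
      intro j
      have h2 : (⨆ k, f k) ≤ W - f j := ciSup_le (fun k => by linarith [hfk j k])
      linarith
    linarith

private lemma aux_omega_to_mg (M N : ℕ → ℝ) (hM : LCseq M) (hN : LCseq N) :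
      (∃ A : ℝ, 1 ≤ A ∧ ∀ t : ℝ, 0 ≤ t →
        2 * assocWeight N t ≤ assocWeight M (A * t)) →
    (∃ C : ℝ, 1 ≤ C ∧ ∀ j k : ℕ, M (j + k) ≤ C ^ (j + k) * N j * N k) := by
  rintro ⟨A, hA, hw⟩
  refine ⟨A, hA, fun j k => ?_⟩
  have hA0 : (0:ℝ) < A := lt_of_lt_of_le one_pos hA
  have hμ0 : 0 < M (j+k+1) / M (j+k) := div_pos (hM.1 _) (hM.1 _)
  set μ := M (j+k+1) / M (j+k) with hμdef
  set t0 := μ / A with ht0def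
  have ht0 : 0 < t0 := div_pos hμ0 hA0
  have hAt0 : A * t0 = μ := by
    rw [ht0def, mul_div_cancel₀ _ hA0.ne']
  have hWle : assocWeight M (A * t0) ≤ Real.log (μ^(j+k) / M (j+k)) := by
    rw [hAt0, assocWeight_pos_eq M hμ0]
    exact ciSup_le fun q => Real.log_le_log (div_pos (pow_pos hμ0 q) (hM.1 q)) (key_div hM (j+k) q)
  have hj : Real.log (t0^j / N j) ≤ assocWeight N t0 := by
    rw [assocWeight_pos_eq N ht0]; exact le_ciSup (LC_bddAbove hN ht0) j
  have hk : Real.log (t0^k / N k) ≤ assocWeight N t0 := by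
    rw [assocWeight_pos_eq N ht0]; exact le_ciSup (LC_bddAbove hN ht0) k
  have hchain : Real.log (t0^j/N j) + Real.log (t0^k/N k) ≤ Real.log (μ^(j+k)/M (j+k)) := by
    have := hw t0 ht0.le
    linarith
  have hNj := hN.1 j; have hNk := hN.1 k; have hMp := hM.1 (j+k)
  have hlog : Real.log (t0^(j+k)/(N j * N k)) ≤ Real.log (μ^(j+k)/M (j+k)) := by
    rw [show t0^(j+k)/(N j * N k) = (t0^j/N j) * (t0^k/N k) by rw [pow_add]; field_simp]
    rw [Real.log_mul (by positivity) (by positivity)]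
    exact hchain
  have h2 : t0^(j+k)/(N j * N k) ≤ μ^(j+k)/M (j+k) := by
    have h3 := Real.exp_le_exp.2 hlog
    rwa [Real.exp_log (by positivity), Real.exp_log (by positivity)] at h3
  rw [div_le_div_iff₀ (by positivity) hMp] at h2
  have hμp : μ^(j+k) = A^(j+k) * t0^(j+k) := by rw [← hAt0, mul_pow]
  have ht0p : (0:ℝ) < t0^(j+k) := by positivity
  have h3 : t0^(j+k) * M (j+k) ≤ t0^(j+k) * (A^(j+k) * N j * N k) := by
    rw [hμp] at h2; nlinarith
  have := le_of_mul_le_mul_left h3 ht0p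
  linarith

private lemma aux_mg_to_h (M N : ℕ → ℝ) (hM : LCseq M) (hN : LCseq N) :
    (∃ C : ℝ, 1 ≤ C ∧ ∀ j k : ℕ, M (j + k) ≤ C ^ (j + k) * N j * N k) →
      (∃ A : ℝ, 1 ≤ A ∧ ∀ t : ℝ, 0 < t → hFun M t ≤ (hFun N (A * t)) ^ 2) := by
  rintro ⟨C, hC, hmg⟩
  refine ⟨C, hC, fun t ht => ?_⟩
  have hC0 : (0:ℝ) < C := lt_of_lt_of_le one_pos hC
  have hCt : 0 < C * t := by positivity
  set a : ℕ → ℝ := fun j => N j * (C*t)^j with ha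
  have hapos : ∀ j, 0 < a j := fun j => mul_pos (hN.1 j) (pow_pos hCt j)
  set I := ⨅ j, a j with hI
  have hI0 : 0 ≤ I := le_ciInf fun j => (hapos j).le
  have hbddM : BddBelow (Set.range fun k => M k * t^k) :=
    ⟨0, by rintro x ⟨q, rfl⟩; exact (mul_pos (hM.1 q) (pow_pos ht q)).le⟩
  have hjk : ∀ j k, hFun M t ≤ a j * a k := by
    intro j k
    have h1 : hFun M t ≤ M (j+k) * t^(j+k) := ciInf_le hbddM (j+k)
    have h2 : M (j+k) * t^(j+k) ≤ a j * a k := by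
      calc M (j+k)*t^(j+k) ≤ (C^(j+k)*N j*N k)*t^(j+k) :=
        mul_le_mul_of_nonneg_right (hmg j k) (by positivity)
      _ = a j * a k := by
        rw [ha]; simp only []; rw [pow_add, mul_pow, mul_pow, pow_add]; ring
    linarith
  have hIk : ∀ k, hFun M t ≤ I * a k := by
    intro k
    have h1 : hFun M t / a k ≤ I :=
      le_ciInf fun j => (div_le_iff₀ (hapos k)).2 (hjk j k)
    calc hFun M t = (hFun M t / a k) * a k := (div_mul_cancel₀ _ (hapos k).ne').symm
    _ ≤ I * a k := mul_le_mul_of_nonneg_right h1 (hapos k).le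
  have hIN : hFun N (C*t) = I := rfl
  rw [hIN]
  rcases eq_or_lt_of_le hI0 with hI0' | hI0'
  · have h0 := hIk 0
    rw [← hI0'] at h0
    rw [← hI0']
    simpa using h0
  · have h1 : hFun M t / I ≤ I :=
      le_ciInf fun k => (div_le_iff₀ hI0').2 (by rw [mul_comm]; exact hIk k)
    have h2 := (div_le_iff₀ hI0').1 h1
    calc hFun M t ≤ I * I := h2
    _ = I^2 := (sq I).symm

private lemma aux_h_to_mg (M N : ℕ → ℝ) (hM : LCseq M) (hN : LCseq N) :
      (∃ A : ℝ, 1 ≤ A ∧ ∀ t : ℝ, 0 < t → hFun M t ≤ (hFun N (A * t)) ^ 2) →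
    (∃ C : ℝ, 1 ≤ C ∧ ∀ j k : ℕ, M (j + k) ≤ C ^ (j + k) * N j * N k) := by
  rintro ⟨A, hA, hh⟩
  refine ⟨A, hA, fun j k => ?_⟩
  have hA0 : (0:ℝ) < A := lt_of_lt_of_le one_pos hA
  set t0 := M (j+k) / M (j+k+1) with ht0def
  have ht0 : 0 < t0 := div_pos (hM.1 _) (hM.1 _)
  have hAt0 : 0 < A * t0 := by positivity
  have hlow : M (j+k) * t0^(j+k) ≤ hFun M t0 := le_ciInf fun q => key_inv hM (j+k) q
  have hbddN : BddBelow (Set.range fun q => N q * (A*t0)^q) :=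
    ⟨0, by rintro x ⟨q, rfl⟩; exact (mul_pos (hN.1 q) (pow_pos hAt0 q)).le⟩
  have hupj : hFun N (A*t0) ≤ N j * (A*t0)^j := ciInf_le hbddN j
  have hupk : hFun N (A*t0) ≤ N k * (A*t0)^k := ciInf_le hbddN k
  have hNn : 0 ≤ hFun N (A*t0) := le_ciInf fun q => (mul_pos (hN.1 q) (pow_pos hAt0 q)).le
  have hsq : (hFun N (A*t0))^2 ≤ (N j * (A*t0)^j) * (N k * (A*t0)^k) := by
    rw [sq]
    exact mul_le_mul hupj hupk hNn (mul_pos (hN.1 j) (pow_pos hAt0 j)).le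
  have hfinal : M (j+k) * t0^(j+k) ≤ (A^(j+k) * N j * N k) * t0^(j+k) := by
    have h1 := hh t0 ht0
    have h2 : (N j * (A*t0)^j) * (N k * (A*t0)^k) = (A^(j+k) * N j * N k) * t0^(j+k) := by
      rw [mul_pow, mul_pow, pow_add, pow_add]; ring
    linarith [hsq, hlow]
  exact le_of_mul_le_mul_right hfinal (pow_pos ht0 _)

/-- characterization of the mixed moderate growth condition
`(M,N)_{(mg)}` via `ω_M`, `ω_N` and via `h_M`, `h_N`. -/
theorem mixed_moderate_growth_characterization
    (M N : ℕ → ℝ) (hM : LCseq M) (hN : LCseq N) :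
    ((∃ C : ℝ, 1 ≤ C ∧ ∀ j k : ℕ, M (j + k) ≤ C ^ (j + k) * N j * N k) ↔
      (∃ A : ℝ, 1 ≤ A ∧ ∀ t : ℝ, 0 ≤ t →
        2 * assocWeight N t ≤ assocWeight M (A * t))) ∧
    ((∃ C : ℝ, 1 ≤ C ∧ ∀ j k : ℕ, M (j + k) ≤ C ^ (j + k) * N j * N k) ↔
      (∃ A : ℝ, 1 ≤ A ∧ ∀ t : ℝ, 0 < t → hFun M t ≤ (hFun N (A * t)) ^ 2)) :=
  ⟨⟨aux_mg_to_omega M N hM hN, aux_omega_to_mg M N hM hN⟩,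
   ⟨aux_mg_to_h M N hM hN, aux_h_to_mg M N hM hN⟩⟩
end

section
/- A weight function ω satisfies (ω_snq) — there exists C > 0 such that ∫₁^∞ ω(yt)/t² dt ≤ C(ω(y) + 1) for all y > 0 — if and only if γ(ω) > 1, i.e. if and only if there exist γ > 1 and K > 1 with limsup_{t→∞} ω(K^γ t)/ω(t) < K. -/
open Filter MeasureTheory Set Asymptotics

-- ### Auxiliary lemmas ###

lemma wf_nonneg {ω : ℝ → ℝ} (hω : IsWeightFunction ω) {y : ℝ} (hy : 0 ≤ y) : 0 ≤ ω y := by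
  rw [← hω.map_zero]
  exact hω.monotoneOn (mem_Ici.2 le_rfl) (mem_Ici.2 hy) hy

lemma wf_mono {ω : ℝ → ℝ} (hω : IsWeightFunction ω) {x y : ℝ} (hx : 0 ≤ x) (hxy : x ≤ y) :
    ω x ≤ ω y := hω.monotoneOn (mem_Ici.2 hx) (mem_Ici.2 (hx.trans hxy)) hxy

lemma pcond_imp_snq {ω : ℝ → ℝ} (hω : IsWeightFunction ω) {γ : ℝ} (hγ : 1 < γ)
    (h : Pcond ω γ) : OmegaSnq ω := by
  obtain ⟨K, hK, c, hcK, hev⟩ := h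
  set a := K ^ γ with ha
  have hKa : K < a := by
    rw [ha]
    nth_rewrite 1 [← Real.rpow_one K]
    exact Real.rpow_lt_rpow_of_exponent_lt hK hγ
  have ha1 : 1 < a := hK.trans hKa
  have ha0 : 0 < a := lt_trans one_pos ha1
  -- find threshold T
  obtain ⟨T₁, hT₁⟩ := eventually_atTop.1 hev
  obtain ⟨T₂, hT₂⟩ := eventually_atTop.1 (hω.tendsto_atTop.eventually_ge_atTop 1)
  set T := max 1 (max T₁ T₂) with hT
  have hT1 : (1:ℝ) ≤ T := le_max_left _ _
  have hT0 : (0:ℝ) < T := lt_of_lt_of_le one_pos hT1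
  have hωT : ∀ t : ℝ, T ≤ t → 1 ≤ ω t := fun t ht =>
    hT₂ t (le_trans (le_trans (le_max_right _ _) (le_max_right _ _)) ht)
  have hrat : ∀ t : ℝ, T ≤ t → ω (a * t) ≤ c * ω t := by
    intro t ht
    have h1 : ω (a * t) / ω t ≤ c := hT₁ t (le_trans (le_trans (le_max_left _ _) (le_max_right _ _)) ht)
    have h2 : (0:ℝ) < ω t := lt_of_lt_of_le one_pos (hωT t ht)
    exact (div_le_iff₀ h2).1 h1
  have hc1 : 1 ≤ c := by
    have h2 : (0:ℝ) < ω T := lt_of_lt_of_le one_pos (hωT T le_rfl)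
    have h3 : ω T ≤ ω (a * T) := wf_mono hω (le_of_lt hT0) (by nlinarith)
    nlinarith [hrat T le_rfl]
  have hca : c < a := lt_trans hcK hKa
  -- iterated bound
  have hiter : ∀ y : ℝ, T ≤ y → ∀ n : ℕ, ω (y * a ^ n) ≤ c ^ n * ω y := by
    intro y hy
    intro n
    induction n with
    | zero => simp
    | succ n ih =>
      have hyan : T ≤ y * a ^ n := le_trans hy (by nlinarith [one_le_pow₀ (le_of_lt ha1) (n := n), hT0.trans_le hy])
      have := hrat (y * a ^ n) hyan
      calc ω (y * a ^ (n+1)) = ω (a * (y * a ^ n)) := by ring_nf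
        _ ≤ c * ω (y * a ^ n) := this
        _ ≤ c * (c ^ n * ω y) := by nlinarith [lt_of_lt_of_le one_pos hc1]
        _ = c ^ (n+1) * ω y := by ring
  -- geometric constants
  set ρ := c / a with hρ
  have hc0 : (0:ℝ) < c := lt_of_lt_of_le one_pos hc1
  have hρ0 : 0 ≤ ρ := by positivity
  have hρ1 : ρ < 1 := (div_lt_one ha0).2 hca
  set C0 := (a - 1) * c * (1 - ρ)⁻¹ with hC0
  have h1ρ : 0 < 1 - ρ := by linarith
  have hC0pos : 0 < C0 := by
    have ha1' : 0 < a - 1 := by linarith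
    positivity
  have hbound : ∀ y : ℝ, T ≤ y →
      (∫⁻ t in Set.Ioi (1:ℝ), ENNReal.ofReal (ω (y * t) / t ^ 2)) ≤ ENNReal.ofReal (C0 * ω y) := by
    intro y hy
    have hy0 : 0 < y := lt_of_lt_of_le hT0 hy
    have hcov : Ioi (1:ℝ) ⊆ ⋃ n : ℕ, Ioc (a ^ n) (a ^ (n+1)) := by
      intro t ht
      have ht1 : (1:ℝ) < t := ht
      obtain ⟨m, hm⟩ := pow_unbounded_of_one_lt t ha1
      have hex : ∃ m : ℕ, t ≤ a ^ m := ⟨m, le_of_lt hm⟩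
      classical
      have hm0spec : t ≤ a ^ (Nat.find hex) := Nat.find_spec hex
      have hm0pos : Nat.find hex ≠ 0 := by
        intro h0
        rw [h0] at hm0spec; simp at hm0spec; linarith
      obtain ⟨k, hk⟩ := Nat.exists_eq_succ_of_ne_zero hm0pos
      refine mem_iUnion.2 ⟨k, ?_, ?_⟩
      · have hlt : ¬ t ≤ a ^ k := Nat.find_min hex (by omega)
        linarith [not_le.1 hlt]
      · calc t ≤ a ^ Nat.find hex := hm0spec
          _ = a ^ (k+1) := by rw [hk]
    have hblock : ∀ n : ℕ, (∫⁻ t in Ioc (a ^ n) (a^(n+1)), ENNReal.ofReal (ω (y * t) / t ^ 2))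
        ≤ ENNReal.ofReal ((a-1) * c * ω y * ρ ^ n) := by
      intro n
      have han : (0:ℝ) < a ^ n := pow_pos ha0 n
      have h1 : (∫⁻ t in Ioc (a ^ n) (a^(n+1)), ENNReal.ofReal (ω (y * t) / t ^ 2))
          ≤ ∫⁻ _ in Ioc (a ^ n) (a^(n+1)), ENNReal.ofReal (ω (y * a^(n+1)) / (a ^ n) ^ 2) := by
        apply lintegral_mono_ae
        rw [ae_restrict_iff' measurableSet_Ioc]
        filter_upwards with t ht
        apply ENNReal.ofReal_le_ofReal
        have ht0 : (0:ℝ) < t := lt_trans han ht.1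
        have h2 : ω (y * t) ≤ ω (y * a^(n+1)) :=
          wf_mono hω (by positivity) (mul_le_mul_of_nonneg_left ht.2 hy0.le)
        exact div_le_div₀ (wf_nonneg hω (by positivity)) h2 (by positivity)
          (pow_le_pow_left₀ han.le ht.1.le 2)
      have h3 : ω (y * a^(n+1)) ≤ c^(n+1) * ω y := hiter y hy (n+1)
      have hωn : 0 ≤ ω (y * a^(n+1)) := wf_nonneg hω (by positivity)
      calc (∫⁻ t in Ioc (a ^ n) (a^(n+1)), ENNReal.ofReal (ω (y * t) / t ^ 2))
          ≤ _ := h1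
        _ = ENNReal.ofReal (ω (y * a^(n+1)) / (a ^ n) ^ 2) * volume (Ioc (a^n) (a^(n+1))) :=
            setLIntegral_const _ _
        _ = ENNReal.ofReal (ω (y * a^(n+1)) / (a ^ n) ^ 2 * (a^(n+1) - a^n)) := by
            rw [Real.volume_Ioc, ← ENNReal.ofReal_mul (by positivity)]
        _ ≤ ENNReal.ofReal ((a-1) * c * ω y * ρ ^ n) := by
            apply ENNReal.ofReal_le_ofReal
            have he1 : ω (y * a^(n+1)) / (a ^ n) ^ 2 * (a^(n+1) - a^n)
                = ω (y * a^(n+1)) * ((a-1) / a^n) := by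
              field_simp
              ring
            have he2 : (a-1) * c * ω y * ρ ^ n = (c^(n+1) * ω y) * ((a-1) / a^n) := by
              rw [hρ, div_pow]
              field_simp
              ring
            rw [he1, he2]
            have hd0 : 0 ≤ (a-1) / a^n := div_nonneg (by linarith) (pow_pos ha0 n).le
            exact mul_le_mul_of_nonneg_right h3 hd0
    calc (∫⁻ t in Set.Ioi (1:ℝ), ENNReal.ofReal (ω (y * t) / t ^ 2))
        ≤ ∫⁻ t in ⋃ n : ℕ, Ioc (a ^ n) (a^(n+1)), ENNReal.ofReal (ω (y * t) / t ^ 2) :=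
          lintegral_mono_set hcov
      _ ≤ ∑' n : ℕ, ∫⁻ t in Ioc (a ^ n) (a^(n+1)), ENNReal.ofReal (ω (y * t) / t ^ 2) :=
          lintegral_iUnion_le _ _
      _ ≤ ∑' n : ℕ, ENNReal.ofReal ((a-1) * c * ω y * ρ ^ n) := ENNReal.tsum_le_tsum hblock
      _ = ENNReal.ofReal (∑' n : ℕ, (a-1) * c * ω y * ρ ^ n) := by
          have hωy : 0 ≤ ω y := wf_nonneg hω (le_of_lt hy0)
          have hb0 : 0 ≤ (a-1) * c * ω y :=
            mul_nonneg (mul_nonneg (by linarith) hc0.le) hωy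
          rw [ENNReal.ofReal_tsum_of_nonneg
            (fun n => mul_nonneg hb0 (pow_nonneg hρ0 n))
            ((summable_geometric_of_lt_one hρ0 hρ1).mul_left _)]
      _ = ENNReal.ofReal (C0 * ω y) := by
          rw [tsum_mul_left, tsum_geometric_of_lt_one hρ0 hρ1, hC0]
          ring_nf
  -- final assembly
  have hωT1 : 1 ≤ ω T := hωT T le_rfl
  refine ⟨C0 * (ω T + 1), by nlinarith, ?_⟩
  intro y hy0
  rcases le_or_gt T y with hTy | hyT
  · refine (hbound y hTy).trans (ENNReal.ofReal_le_ofReal ?_)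
    have hωy : 0 ≤ ω y := wf_nonneg hω hy0.le
    nlinarith [mul_nonneg (mul_nonneg hC0pos.le (by linarith : (0:ℝ) ≤ ω T)) hωy,
      mul_nonneg hC0pos.le hωy]
  · have hmono : (∫⁻ t in Set.Ioi (1:ℝ), ENNReal.ofReal (ω (y * t) / t ^ 2))
        ≤ ∫⁻ t in Set.Ioi (1:ℝ), ENNReal.ofReal (ω (T * t) / t ^ 2) := by
      apply lintegral_mono_ae
      rw [ae_restrict_iff' measurableSet_Ioi]
      filter_upwards with t ht
      apply ENNReal.ofReal_le_ofReal
      have ht0 : (0:ℝ) < t := lt_trans one_pos ht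
      have h2 : ω (y * t) ≤ ω (T * t) :=
        wf_mono hω (by positivity) (mul_le_mul_of_nonneg_right hyT.le ht0.le)
      exact div_le_div₀ (wf_nonneg hω (by positivity)) h2 (by positivity) le_rfl
    refine hmono.trans ((hbound T le_rfl).trans (ENNReal.ofReal_le_ofReal ?_))
    have hωy : 0 ≤ ω y := wf_nonneg hω hy0.le
    nlinarith [mul_nonneg (mul_nonneg hC0pos.le (by linarith : (0:ℝ) ≤ ω T)) hωy,
      mul_nonneg hC0pos.le hωy, mul_nonneg hC0pos.le (by linarith : (0:ℝ) ≤ ω T)]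

section Kap
variable {ω : ℝ → ℝ}

/-- continuity of the integrand on `Ioi 1` -/
lemma kap_contOn (hω : IsWeightFunction ω) {y : ℝ} (hy : 0 < y) :
    ContinuousOn (fun t : ℝ => ω (y * t) / t ^ 2) (Ioi 1) := by
  apply ContinuousOn.div
  · apply hω.continuousOn.comp (continuous_const.mul continuous_id).continuousOn
    intro t ht
    have : (1:ℝ) < t := ht
    simp only [mem_Ici, id_eq]
    show (0:ℝ) ≤ y * t
    positivity
  · exact (continuous_pow 2).continuousOn
  · intro t ht
    have : (1:ℝ) < t := ht
    positivity

lemma kap_integrand_nonneg (hω : IsWeightFunction ω) {y : ℝ} (hy : 0 < y) :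
    ∀ t ∈ Ioi (1:ℝ), 0 ≤ ω (y * t) / t ^ 2 := by
  intro t ht
  have ht1 : (1:ℝ) < t := ht
  have := wf_nonneg hω (show (0:ℝ) ≤ y * t by positivity)
  positivity

lemma kap_integrable (hω : IsWeightFunction ω) {y : ℝ} (hy : 0 < y) {B : ℝ}
    (hB : (∫⁻ t in Set.Ioi (1:ℝ), ENNReal.ofReal (ω (y * t) / t ^ 2)) ≤ ENNReal.ofReal B) :
    IntegrableOn (fun t : ℝ => ω (y * t) / t ^ 2) (Ioi 1) := by
  constructor
  · exact (kap_contOn hω hy).aestronglyMeasurable measurableSet_Ioi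
  · rw [hasFiniteIntegral_iff_ofReal]
    · exact lt_of_le_of_lt hB ENNReal.ofReal_lt_top
    · rw [Filter.EventuallyLE, ae_restrict_iff' measurableSet_Ioi]
      filter_upwards with t ht
      exact kap_integrand_nonneg hω hy t ht

lemma kap_eq_lintegral (hω : IsWeightFunction ω) {y : ℝ} (hy : 0 < y) :
    (∫ t in Ioi (1:ℝ), ω (y * t) / t ^ 2)
      = (∫⁻ t in Set.Ioi (1:ℝ), ENNReal.ofReal (ω (y * t) / t ^ 2)).toReal := by
  apply integral_eq_lintegral_of_nonneg_ae
  · rw [Filter.EventuallyLE, ae_restrict_iff' measurableSet_Ioi]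
    filter_upwards with t ht
    exact kap_integrand_nonneg hω hy t ht
  · exact (kap_contOn hω hy).aestronglyMeasurable measurableSet_Ioi

end Kap
lemma invsq_eqOn : ∀ t ∈ Ioi (1:ℝ), t ^ (-2:ℝ) = (t^2)⁻¹ := by
  intro t ht
  have ht0 : (0:ℝ) < t := lt_trans one_pos ht
  rw [show (-2:ℝ) = -((2:ℕ):ℝ) by norm_num, Real.rpow_neg ht0.le, Real.rpow_natCast]

lemma integrableOn_inv_sq : IntegrableOn (fun t : ℝ => (t^2)⁻¹) (Ioi 1) := by
  have h := integrableOn_Ioi_rpow_of_lt (a := -2) (by norm_num) (c := 1) one_pos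
  exact h.congr_fun invsq_eqOn measurableSet_Ioi

lemma integral_Ioi_inv_sq : (∫ t in Ioi (1:ℝ), (t^2)⁻¹) = 1 := by
  rw [← setIntegral_congr_fun measurableSet_Ioi invsq_eqOn]
  rw [integral_Ioi_rpow_of_lt (by norm_num) one_pos]
  norm_num

lemma integral_Ioc_inv_sq {s : ℝ} (hs : 1 ≤ s) : (∫ u in Ioc (1:ℝ) s, (u^2)⁻¹) = 1 - s⁻¹ := by
  rw [← intervalIntegral.integral_of_le hs]
  have h1 : (∫ u in (1:ℝ)..s, (u^2)⁻¹) = ∫ u in (1:ℝ)..s, (u:ℝ) ^ (-2:ℤ) := by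
    apply intervalIntegral.integral_congr
    intro u hu
    rw [Set.uIcc_of_le hs] at hu
    have hu0 : (0:ℝ) < u := lt_of_lt_of_le one_pos hu.1
    show (u^2)⁻¹ = u ^ (-2:ℤ)
    rw [zpow_neg]
    norm_num
  rw [h1, integral_zpow (Or.inr ⟨by norm_num, ?_⟩)]
  · norm_num
    ring
  · rw [Set.uIcc_of_le hs]
    intro h
    exact absurd h.1 (by norm_num)

lemma kap_ge {ω : ℝ → ℝ} (hω : IsWeightFunction ω) {y : ℝ} (hy : 0 < y)
    (hint : IntegrableOn (fun t : ℝ => ω (y * t) / t ^ 2) (Ioi 1)) :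
    ω y ≤ ∫ t in Ioi (1:ℝ), ω (y * t) / t ^ 2 := by
  have h1 : IntegrableOn (fun t : ℝ => ω y * (t^2)⁻¹) (Ioi 1) :=
    integrableOn_inv_sq.const_mul _
  have h2 : (∫ t in Ioi (1:ℝ), ω y * (t^2)⁻¹) = ω y := by
    rw [MeasureTheory.integral_const_mul, integral_Ioi_inv_sq, mul_one]
  calc ω y = ∫ t in Ioi (1:ℝ), ω y * (t^2)⁻¹ := h2.symm
    _ ≤ ∫ t in Ioi (1:ℝ), ω (y * t) / t ^ 2 := by
      apply setIntegral_mono_on h1 hint measurableSet_Ioi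
      intro t ht
      have ht1 : (1:ℝ) < t := ht
      have ht0 : (0:ℝ) < t := lt_trans one_pos ht1
      have hm : ω y ≤ ω (y * t) := wf_mono hω hy.le (by nlinarith)
      rw [show ω y * (t^2)⁻¹ = ω y / t^2 from (div_eq_mul_inv _ _).symm]
      exact div_le_div₀ (wf_nonneg hω (by positivity)) hm (by positivity) le_rfl
      
lemma kap_subst {ω : ℝ → ℝ} {s y : ℝ} (hs : 1 < s) (hy : 0 < y) :
    (∫ t in Ioi (1:ℝ), ω ((s * y) * t) / t ^ 2) = s * ∫ u in Ioi s, ω (y * u) / u ^ 2 := by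
  have hs0 : (0:ℝ) < s := lt_trans one_pos hs
  have h := MeasureTheory.integral_comp_mul_left_Ioi (fun u => ω (y * u) / u ^ 2) 1 hs0
  rw [mul_one] at h
  have h2 : (∫ t in Ioi (1:ℝ), ω ((s * y) * t) / t ^ 2)
      = s ^ 2 * ∫ x in Ioi (1:ℝ), ω (y * (s * x)) / (s * x) ^ 2 := by
    rw [← MeasureTheory.integral_const_mul]
    apply setIntegral_congr_fun measurableSet_Ioi
    intro t ht
    have ht1 : (1:ℝ) < t := ht
    have ht0 : (0:ℝ) < t := lt_trans one_pos ht1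
    show ω ((s * y) * t) / t ^ 2 = s ^ 2 * (ω (y * (s * t)) / (s * t) ^ 2)
    rw [show (s * y) * t = y * (s * t) by ring]
    field_simp
  rw [h2, h, smul_eq_mul, ← mul_assoc,
    show s ^ 2 * s⁻¹ = s by rw [sq, mul_assoc, mul_inv_cancel₀ hs0.ne', mul_one]]

set_option maxHeartbeats 1000000 in
lemma snq_imp_pcond {ω : ℝ → ℝ} (hω : IsWeightFunction ω) (h : OmegaSnq ω) :
    ∃ γ : ℝ, 1 < γ ∧ Pcond ω γ := by
  classical
  obtain ⟨C₁, hC₁, hsnq₁⟩ := h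
  obtain ⟨C, hCdef⟩ : ∃ x, x = C₁ + 2 := ⟨_, rfl⟩
  have hC2 : (2:ℝ) ≤ C := by linarith
  have hC0 : (0:ℝ) < C := by linarith
  have hsnq : ∀ y : ℝ, 0 < y →
      (∫⁻ t in Set.Ioi (1:ℝ), ENNReal.ofReal (ω (y * t) / t ^ 2))
        ≤ ENNReal.ofReal (C * (ω y + 1)) := by
    intro y hy
    refine (hsnq₁ y hy).trans (ENNReal.ofReal_le_ofReal ?_)
    have := wf_nonneg hω hy.le
    nlinarith
  obtain ⟨κ, hκ⟩ : ∃ x : ℝ → ℝ, x = fun y => ∫ t in Ioi (1:ℝ), ω (y * t) / t ^ 2 := ⟨_, rfl⟩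
  have hint : ∀ y : ℝ, 0 < y → IntegrableOn (fun t : ℝ => ω (y * t) / t ^ 2) (Ioi 1) :=
    fun y hy => kap_integrable hω hy (hsnq y hy)
  have kapB : ∀ y : ℝ, 0 < y → κ y ≤ C * (ω y + 1) := by
    intro y hy
    rw [hκ]
    simp only
    rw [kap_eq_lintegral hω hy]
    have h1 := ENNReal.toReal_mono ENNReal.ofReal_ne_top (hsnq y hy)
    rwa [ENNReal.toReal_ofReal (by nlinarith [wf_nonneg hω hy.le])] at h1
  have kapA : ∀ y : ℝ, 0 < y → ω y ≤ κ y := by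
    intro y hy
    simp only [hκ]
    exact kap_ge hω hy (hint y hy)
  have kapC : ∀ s : ℝ, 1 < s → ∀ y : ℝ, 0 < y →
      κ (s * y) ≤ s * κ y - (s - 1) * ω y := by
    intro s hs y hy
    have hs0 : (0:ℝ) < s := lt_trans one_pos hs
    have hsub := kap_subst (ω := ω) hs hy
    have hsplit : Ioc (1:ℝ) s ∪ Ioi s = Ioi (1:ℝ) := Ioc_union_Ioi_eq_Ioi hs.le
    have hI : IntegrableOn (fun u : ℝ => ω (y * u) / u ^ 2) (Ioi 1) := hint y hy
    have hI1 : IntegrableOn (fun u : ℝ => ω (y * u) / u ^ 2) (Ioc 1 s) :=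
      hI.mono_set (by rw [← hsplit]; exact subset_union_left)
    have hI2 : IntegrableOn (fun u : ℝ => ω (y * u) / u ^ 2) (Ioi s) :=
      hI.mono_set (by rw [← hsplit]; exact subset_union_right)
    have hadd : κ y = (∫ u in Ioc (1:ℝ) s, ω (y * u) / u ^ 2) + ∫ u in Ioi s, ω (y * u) / u ^ 2 := by
      rw [hκ]
      simp only
      rw [← hsplit, setIntegral_union (Ioc_disjoint_Ioi le_rfl) measurableSet_Ioi hI1 hI2]
    have hlow : (1 - s⁻¹) * ω y ≤ ∫ u in Ioc (1:ℝ) s, ω (y * u) / u ^ 2 := by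
      have hconst : IntegrableOn (fun u : ℝ => ω y * (u^2)⁻¹) (Ioc 1 s) :=
        (integrableOn_inv_sq.mono_set (fun u hu => hu.1)).const_mul _
      have he : (∫ u in Ioc (1:ℝ) s, ω y * (u^2)⁻¹) = (1 - s⁻¹) * ω y := by
        rw [MeasureTheory.integral_const_mul, integral_Ioc_inv_sq hs.le]
        ring
      rw [← he]
      apply setIntegral_mono_on hconst hI1 measurableSet_Ioc
      intro u hu
      have hu0 : (0:ℝ) < u := lt_trans one_pos hu.1
      have hm : ω y ≤ ω (y * u) := wf_mono hω hy.le (by nlinarith [hu.1])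
      rw [show ω y * (u^2)⁻¹ = ω y / u^2 from (div_eq_mul_inv _ _).symm]
      exact div_le_div₀ (wf_nonneg hω (by positivity)) hm (by positivity) le_rfl
    have hκs : κ (s * y) = s * ∫ u in Ioi s, ω (y * u) / u ^ 2 := by
      simp only [hκ]
      exact hsub
    rw [hκs]
    have hmul := mul_le_mul_of_nonneg_left hlow hs0.le
    have hss : s * ((1 - s⁻¹) * ω y) = (s - 1) * ω y := by
      field_simp
    nlinarith [hadd, hmul, hss]
  -- numeric setup
  obtain ⟨a, hadef⟩ : ∃ x, x = 1 - 1/C := ⟨_, rfl⟩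
  have h1C : 1/C ≤ 1/2 := by
    rw [div_le_div_iff₀ hC0 (by norm_num)]
    linarith
  have h0C : 0 < 1/C := by positivity
  have ha05 : (1:ℝ)/2 ≤ a := by rw [hadef]; linarith
  have ha1 : a < 1 := by rw [hadef]; linarith
  have ha0 : 0 < a := by linarith
  have hainvmul : a * a⁻¹ = 1 := mul_inv_cancel₀ ha0.ne'
  have hainv0 : 0 < a⁻¹ := inv_pos.2 ha0
  have hainv : 1 < a⁻¹ := by nlinarith
  have hainv2 : a⁻¹ ≤ 2 := by nlinarith
  obtain ⟨s, hsdef⟩ : ∃ x, x = (1 + a⁻¹)/2 := ⟨_, rfl⟩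
  have hs1 : 1 < s := by rw [hsdef]; linarith
  have hs32 : s ≤ 3/2 := by rw [hsdef]; linarith
  have hs0 : (0:ℝ) < s := lt_trans one_pos hs1
  have hsa : s * a < 1 := by
    have h1 : s * a = (a + 1)/2 := by rw [hsdef]; field_simp
    rw [h1]; linarith
  have hsa0 : 0 < s * a := by positivity
  have hsamul : (s*a) * (s*a)⁻¹ = 1 := mul_inv_cancel₀ hsa0.ne'
  have hsainv0 : 0 < (s*a)⁻¹ := inv_pos.2 hsa0
  have hsainv : 1 < (s*a)⁻¹ := by nlinarith
  obtain ⟨γ, hγdef⟩ : ∃ x, x = (1 + (s*a)⁻¹)/2 := ⟨_, rfl⟩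
  have hγ1 : 1 < γ := by rw [hγdef]; linarith
  have hγ0 : 0 < γ := by linarith
  have hγsa : γ * (s * a) < 1 := by
    have h1 : γ * (s * a) = (s*a + 1)/2 := by
      rw [hγdef]; field_simp
    rw [h1]; linarith
  obtain ⟨r, hrdef⟩ : ∃ x, x = 1 + (s - 1) * a := ⟨_, rfl⟩
  have hr1 : 1 ≤ r := by nlinarith
  have hr0 : 0 < r := by linarith
  obtain ⟨δ, hδdef⟩ : ∃ x, x = (s - 1) * ((γ * s)⁻¹ - a) := ⟨_, rfl⟩
  have hγs0 : 0 < γ * s := by positivity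
  have hδ0 : 0 < δ := by
    have h1 : (γ * s)⁻¹ - a = (1 - γ * (s * a))/(γ * s) := by field_simp
    have h2 : 0 < (γ * s)⁻¹ - a := by rw [h1]; exact div_pos (by linarith) hγs0
    rw [hδdef]
    nlinarith
  -- one-step and iterated estimates
  have hstep : ∀ z : ℝ, 0 < z → κ (s * z) ≤ r * κ z + (s - 1) := by
    intro z hz
    have h1 := kapC s hs1 z hz
    have h2 := kapB z hz
    have h3 : κ z / C - 1 ≤ ω z := by
      have h4 : κ z / C ≤ ω z + 1 := (div_le_iff₀ hC0).2 (by linarith)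
      linarith
    have hkey : r * κ z + (s - 1) = s * κ z - (s - 1) * (κ z / C - 1) := by
      rw [hrdef, hadef]
      ring
    rw [hkey]
    have h4 : (s - 1) * (κ z / C - 1) ≤ (s - 1) * ω z :=
      mul_le_mul_of_nonneg_left h3 (by linarith)
    linarith
  have hiter : ∀ n : ℕ, ∀ y : ℝ, 0 < y →
      κ (s ^ n * y) ≤ r ^ n * κ y + (s - 1) * n * r ^ n := by
    intro n
    induction n with
    | zero => intro y hy; simp
    | succ n ih =>
      intro y hy
      have hy' : 0 < s ^ n * y := by positivity
      have h1 := hstep (s ^ n * y) hy'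
      have h2 := ih y hy
      have hκnn : 0 ≤ κ y := le_trans (wf_nonneg hω hy.le) (kapA y hy)
      have hrn : (1:ℝ) ≤ r ^ (n+1) := one_le_pow₀ hr1
      have hrnn : (0:ℝ) < r ^ n := pow_pos hr0 n
      have hn0 : (0:ℝ) ≤ (n:ℝ) := Nat.cast_nonneg n
      push_cast
      calc κ (s ^ (n+1) * y) = κ (s * (s ^ n * y)) := by rw [show s ^ (n+1) * y = s * (s ^ n * y) by ring]
        _ ≤ r * κ (s ^ n * y) + (s - 1) := h1
        _ ≤ r * (r ^ n * κ y + (s - 1) * n * r ^ n) + (s - 1) := by nlinarith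
        _ = r ^ (n+1) * κ y + (s - 1) * n * r ^ (n+1) + (s - 1) := by ring
        _ ≤ r ^ (n+1) * κ y + (s - 1) * (n+1) * r ^ (n+1) := by nlinarith
  -- exponential estimates
  have hrexp : ∀ n : ℕ, r ^ n ≤ Real.exp (n * ((s-1)*a)) := by
    intro n
    rw [Real.exp_nat_mul]
    exact pow_le_pow_left₀ hr0.le (by linarith [Real.add_one_le_exp ((s-1)*a)]) n
  have hlogs : (s - 1)/s ≤ Real.log s := by
    have h1 := Real.log_le_sub_one_of_pos (show (0:ℝ) < s⁻¹ by positivity)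
    rw [Real.log_inv] at h1
    have h2 : (s-1)/s = 1 - s⁻¹ := by field_simp
    rw [h2]
    linarith
  -- choice of n
  have hN : ∃ n : ℕ, 1 ≤ n ∧ 2*C + (s-1)*n < Real.exp (n*δ) := by
    obtain ⟨N, hNdef⟩ : ∃ m : ℕ, m = max 1 (Nat.ceil (4*(2*C + s)/δ^2)) := ⟨_, rfl⟩
    have hNn : 1 ≤ N := by rw [hNdef]; exact le_max_left _ _
    have hN1 : (1:ℝ) ≤ (N:ℝ) := by exact_mod_cast hNn
    have hNc : 4*(2*C + s)/δ^2 ≤ (N:ℝ) := by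
      rw [hNdef]
      exact (Nat.le_ceil _).trans (Nat.cast_le.2 (le_max_right _ _))
    have hNc' : 4*(2*C + s) ≤ (N:ℝ) * δ^2 := by
      rw [div_le_iff₀ (by positivity)] at hNc
      linarith
    have hhalf : (1 + (N:ℝ)*δ/2)^2 ≤ Real.exp ((N:ℝ)*δ) := by
      have h1 := Real.add_one_le_exp ((N:ℝ)*δ/2)
      have h2 : Real.exp ((N:ℝ)*δ/2) ^ 2 = Real.exp ((N:ℝ)*δ) := by
        rw [sq, ← Real.exp_add]
        ring_nf
      calc (1 + (N:ℝ)*δ/2)^2 ≤ Real.exp ((N:ℝ)*δ/2)^2 :=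
            pow_le_pow_left₀ (by positivity) (by linarith) 2
        _ = _ := h2
    refine ⟨N, hNn, lt_of_lt_of_le ?_ hhalf⟩
    nlinarith [mul_le_mul_of_nonneg_left hNc' (by positivity : (0:ℝ) ≤ (N:ℝ))]
  obtain ⟨n, hn1, hnkey⟩ := hN
  have hn0 : (0:ℝ) < (n:ℝ) := by exact_mod_cast Nat.lt_of_lt_of_le Nat.zero_lt_one hn1
  obtain ⟨K, hKdef⟩ : ∃ x, x = s ^ ((n:ℝ)/γ) := ⟨_, rfl⟩
  have hK1 : 1 < K := by
    rw [hKdef, Real.one_lt_rpow_iff_of_pos hs0]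
    left
    exact ⟨hs1, by positivity⟩
  have hKγ : K ^ γ = s ^ n := by
    rw [hKdef, ← Real.rpow_natCast s n, ← Real.rpow_mul hs0.le, div_mul_cancel₀ _ hγ0.ne']
  obtain ⟨c, hcdef⟩ : ∃ x, x = r ^ n * (2*C + (s-1)*n) := ⟨_, rfl⟩
  have hcK : c < K := by
    have h1 : c < Real.exp (n*((s-1)*a)) * Real.exp (n*δ) := by
      rw [hcdef]
      apply mul_lt_mul' (hrexp n) hnkey ?_ (Real.exp_pos _)
      nlinarith [mul_nonneg (by linarith : (0:ℝ) ≤ s - 1) hn0.le]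
    rw [← Real.exp_add] at h1
    have h2 : (n:ℝ)*((s-1)*a) + n*δ = n * ((s-1)/(γ*s)) := by
      rw [hδdef]
      field_simp
      ring
    rw [h2] at h1
    have h3 : Real.exp ((n:ℝ) * ((s-1)/(γ*s))) ≤ K := by
      rw [hKdef, Real.rpow_def_of_pos hs0]
      apply Real.exp_le_exp.2
      have h4 : (n:ℝ) * ((s-1)/(γ*s)) = ((n:ℝ)/γ) * ((s-1)/s) := by
        field_simp
      rw [h4, mul_comm (Real.log s)]
      exact mul_le_mul_of_nonneg_left hlogs (by positivity)
    exact lt_of_lt_of_le h1 h3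
  -- conclusion
  obtain ⟨Y₀, hY₀⟩ := eventually_atTop.1 (hω.tendsto_atTop.eventually_ge_atTop 1)
  refine ⟨γ, hγ1, K, hK1, c, hcK, ?_⟩
  rw [eventually_atTop]
  refine ⟨max Y₀ 1, fun y hy => ?_⟩
  have hy1 : (1:ℝ) ≤ y := le_trans (le_max_right _ _) hy
  have hy0 : (0:ℝ) < y := lt_of_lt_of_le one_pos hy1
  have hωy : 1 ≤ ω y := hY₀ y (le_trans (le_max_left _ _) hy)
  have hsn0 : (0:ℝ) < s ^ n * y := by positivity
  have h2 : ω (s ^ n * y) ≤ κ (s ^ n * y) := kapA _ hsn0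
  have h3 := hiter n y hy0
  have h4 := kapB y hy0
  have hrn0 : (0:ℝ) < r ^ n := pow_pos hr0 n
  have h5 : κ (s ^ n * y) ≤ r^n * (C * (ω y + 1)) + (s-1)*n*r^n := by
    have := mul_le_mul_of_nonneg_left h4 hrn0.le
    linarith
  have h6 : r^n * (C * (ω y + 1)) + (s-1)*n*r^n ≤ c * ω y := by
    rw [hcdef]
    nlinarith [mul_nonneg (mul_nonneg hrn0.le
      (by nlinarith : (0:ℝ) ≤ C + (s-1)*n)) (by linarith : (0:ℝ) ≤ ω y - 1)]
  have hωy0 : (0:ℝ) < ω y := by linarith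
  rw [hKγ, div_le_iff₀ hωy0]
  linarith

/-- Lemma 4.3 analogue: a weight function satisfies `(ω_snq)`
iff `γ(ω) > 1`, i.e. iff `(P_{ω,γ})` holds for some `γ > 1`. -/
theorem snq_iff_gammaIndex_gt_one
    (ω : ℝ → ℝ) (hω : IsWeightFunction ω) :
    (OmegaSnq ω ↔ 1 < gammaIndex ω) ∧
    (OmegaSnq ω ↔ ∃ γ : ℝ, 1 < γ ∧ Pcond ω γ) := by
  have h2 : OmegaSnq ω ↔ ∃ γ : ℝ, 1 < γ ∧ Pcond ω γ :=
    ⟨fun h => snq_imp_pcond hω h, fun ⟨γ, hγ, hp⟩ => pcond_imp_snq hω hγ hp⟩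
  refine ⟨h2.trans ?_, h2⟩
  constructor
  · rintro ⟨γ, hγ, hp⟩
    have hmem : γ ∈ {γ : ℝ | 0 < γ ∧ Pcond ω γ} := ⟨lt_trans one_pos hγ, hp⟩
    calc (1:ENNReal) < ENNReal.ofReal γ := ENNReal.one_lt_ofReal.2 hγ
      _ ≤ gammaIndex ω := le_iSup₂ (f := fun γ _ => ENNReal.ofReal γ) γ hmem
  · intro h
    rw [gammaIndex, lt_iSup_iff] at h
    obtain ⟨γ, hγ⟩ := h
    rw [lt_iSup_iff] at hγ
    obtain ⟨hmem, h1⟩ := hγ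
    exact ⟨γ, ENNReal.one_lt_ofReal.1 h1, hmem.2⟩
end

section
/- A weight function ω satisfies (ω_1) — there exists L ≥ 1 such that ω(2t) ≤ L(ω(t) + 1) for all t ≥ 0 — if and only if γ(ω) > 0, i.e. if and only if there exist γ > 0 and K > 1 with limsup_{t→∞} ω(K^γ t)/ω(t) < K. -/
open Filter MeasureTheory Set Asymptotics

lemma weight_nonneg (ω : ℝ → ℝ) (hω : IsWeightFunction ω) {t : ℝ} (ht : 0 ≤ t) :
    0 ≤ ω t := by
  have h := hω.monotoneOn (Set.mem_Ici.mpr le_rfl) (Set.mem_Ici.mpr ht) ht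
  rwa [hω.map_zero] at h

lemma omega1_to_pcond (ω : ℝ → ℝ) (hω : IsWeightFunction ω) (h : Omega1 ω) :
    ∃ γ : ℝ, 0 < γ ∧ Pcond ω γ := by
  obtain ⟨L, hL1, hL⟩ := h
  have hK : (1 : ℝ) < L + 2 := by linarith
  have hKpos : (0 : ℝ) < L + 2 := by linarith
  refine ⟨Real.logb (L + 2) 2, Real.logb_pos hK (by norm_num), L + 2, hK, L + 1,
    by linarith, ?_⟩
  have hrw : (L + 2) ^ Real.logb (L + 2) 2 = 2 :=
    Real.rpow_logb hKpos (by linarith) (by norm_num)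
  filter_upwards [Filter.eventually_ge_atTop (0 : ℝ),
    hω.tendsto_atTop.eventually_ge_atTop L] with t ht hωt
  rw [hrw]
  have hωpos : 0 < ω t := lt_of_lt_of_le (by linarith) hωt
  rw [div_le_iff₀ hωpos]
  have := hL t ht
  nlinarith

lemma pcond_to_omega1 (ω : ℝ → ℝ) (hω : IsWeightFunction ω) (γ : ℝ) (hγ : 0 < γ)
    (h : Pcond ω γ) : Omega1 ω := by
  obtain ⟨K, hK, c, hcK, hc⟩ := h
  set c' : ℝ := max c 1 with hc'def
  have hc'1 : (1 : ℝ) ≤ c' := le_max_right _ _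
  set a : ℝ := K ^ γ with hadef
  have ha : 1 < a := Real.one_lt_rpow_iff_of_pos (by linarith) |>.mpr (Or.inl ⟨hK, hγ⟩)
  obtain ⟨n, hn⟩ : ∃ n : ℕ, 2 < a ^ n := pow_unbounded_of_one_lt 2 ha
  -- get a threshold T
  obtain ⟨T₁, hT₁⟩ := Filter.eventually_atTop.mp hc
  obtain ⟨T₂, hT₂⟩ := Filter.eventually_atTop.mp (hω.tendsto_atTop.eventually_ge_atTop 1)
  set T : ℝ := max 1 (max T₁ T₂) with hTdef
  have hT1 : (1 : ℝ) ≤ T := le_max_left _ _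
  have hTpos : (0 : ℝ) < T := by linarith
  have hstep : ∀ t : ℝ, T ≤ t → ω (a * t) ≤ c' * ω t := by
    intro t ht
    have htT₁ : T₁ ≤ t := le_trans (le_trans (le_max_left _ _) (le_max_right _ _)) ht
    have htT₂ : T₂ ≤ t := le_trans (le_trans (le_max_right _ _) (le_max_right _ _)) ht
    have hωt : 1 ≤ ω t := hT₂ t htT₂
    have hdiv : ω (a * t) / ω t ≤ c := hT₁ t htT₁
    have hωpos : 0 < ω t := by linarith
    rw [div_le_iff₀ hωpos] at hdiv
    calc ω (a * t) ≤ c * ω t := hdiv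
      _ ≤ c' * ω t := by
          have : c ≤ c' := le_max_left _ _
          nlinarith
  have hiter : ∀ k : ℕ, ∀ t : ℝ, T ≤ t → ω (a ^ k * t) ≤ c' ^ k * ω t := by
    intro k
    induction k with
    | zero => intro t ht; simp
    | succ k ih =>
      intro t ht
      have hat : T ≤ a * t := by nlinarith
      have h1 : ω (a ^ k * (a * t)) ≤ c' ^ k * ω (a * t) := ih (a * t) hat
      have h2 : ω (a * t) ≤ c' * ω t := hstep t ht
      have hck : (0 : ℝ) ≤ c' ^ k := by positivity
      have heq : a ^ (k + 1) * t = a ^ k * (a * t) := by ring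
      rw [heq, pow_succ]
      calc ω (a ^ k * (a * t)) ≤ c' ^ k * ω (a * t) := h1
        _ ≤ c' ^ k * (c' * ω t) := by nlinarith
        _ = c' ^ k * c' * ω t := by ring
  set L : ℝ := max (c' ^ n) (ω (2 * T) + 1) with hLdef
  have hL1 : (1 : ℝ) ≤ L := le_trans (one_le_pow₀ hc'1) (le_max_left _ _)
  refine ⟨L, hL1, fun t ht => ?_⟩
  have hωt0 : 0 ≤ ω t := weight_nonneg ω hω ht
  rcases le_or_gt T t with hTt | htT
  · -- t ≥ T
    have h2t : 2 * t ≤ a ^ n * t := by nlinarith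
    have hmono : ω (2 * t) ≤ ω (a ^ n * t) :=
      hω.monotoneOn (Set.mem_Ici.mpr (by linarith)) (Set.mem_Ici.mpr (by nlinarith)) h2t
    have := hiter n t hTt
    have hLc : c' ^ n ≤ L := le_max_left _ _
    nlinarith
  · -- t < T
    have hmono : ω (2 * t) ≤ ω (2 * T) :=
      hω.monotoneOn (Set.mem_Ici.mpr (by linarith)) (Set.mem_Ici.mpr (by linarith))
        (by linarith)
    have hLb : ω (2 * T) + 1 ≤ L := le_max_right _ _
    nlinarith

/-- a weight function satisfies `(ω₁)` iff `γ(ω) > 0`,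
i.e. iff `(P_{ω,γ})` holds for some `γ > 0`. -/
theorem omega1_iff_gammaIndex_pos
    (ω : ℝ → ℝ) (hω : IsWeightFunction ω) :
    (Omega1 ω ↔ 0 < gammaIndex ω) ∧
    (Omega1 ω ↔ ∃ γ : ℝ, 0 < γ ∧ Pcond ω γ) := by
  have hiff : Omega1 ω ↔ ∃ γ : ℝ, 0 < γ ∧ Pcond ω γ := by
    constructor
    · exact omega1_to_pcond ω hω
    · rintro ⟨γ, hγ, hP⟩; exact pcond_to_omega1 ω hω γ hγ hP
  refine ⟨?_, hiff⟩
  rw [hiff]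
  constructor
  · rintro ⟨γ, hγ, hP⟩
    have hle : ENNReal.ofReal γ ≤ gammaIndex ω :=
      le_iSup₂ (f := fun γ (_ : γ ∈ {γ : ℝ | 0 < γ ∧ Pcond ω γ}) => ENNReal.ofReal γ)
        γ ⟨hγ, hP⟩
    exact lt_of_lt_of_le (by simpa using hγ) hle
  · intro hpos
    by_contra hne
    push_neg at hne
    have : gammaIndex ω = 0 := by
      unfold gammaIndex
      apply le_antisymm _ zero_le
      apply iSup₂_le
      rintro γ ⟨h1, h2⟩
      exact absurd h2 (hne γ h1)
    simp [this] at hpos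
end
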